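/- arXiv:1403.1121 — 3 statements merged into one kernel-verified Lean document; each statement's English description precedes it below -/
import Mathlib

section
/- Let G be a Hermitian operator on (C²)^⊗n commuting with the cyclic translation operator T, with common orthonormal eigenbasis {|ψ_k⟩ : k = 1,...,2^n} of G and T. Let 2l < n and for each k let ρ_{k,A} be the partial trace of |ψ_k⟩⟨ψ_k| over qubits l+1,...,n. Then 1/2^l ≤ 2^(-n) Σ_{k=1}^{2^n} Tr(ρ_{k,A}²) ≤ 1/2^l + 2^l/n. -/
open Matrix Finset
noncomputable section

/-- The Pauli matrices, with `pauli 0` the identity. -/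
def pauli : Fin 4 → Matrix (Fin 2) (Fin 2) ℂ :=
  ![1, !![0, 1; 1, 0], !![0, -Complex.I; Complex.I, 0], !![1, 0; 0, -1]]

/-- Tensor product `σ^(a 0) ⊗ ⋯ ⊗ σ^(a (l-1))` of Pauli matrices on `l` qubits. -/
def pauliTensor (l : ℕ) (a : Fin l → Fin 4) :
    Matrix (Fin l → Fin 2) (Fin l → Fin 2) ℂ :=
  fun x y => ∏ i, pauli (a i) (x i) (y i)

/-- Cyclic successor on `Fin n`. -/
def cycSucc {n : ℕ} (i : Fin n) : Fin n := ⟨(i.1 + 1) % n, Nat.mod_lt _ i.pos⟩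

/-- The Pauli matrix `σ^(a)` acting on qubit `j` of an `n`-qubit chain. -/
def pauliAt (n : ℕ) (j : Fin n) (a : Fin 4) :
    Matrix (Fin n → Fin 2) (Fin n → Fin 2) ℂ :=
  fun x y => ∏ i, if i = j then pauli a (x i) (y i) else (if x i = y i then 1 else 0)

/-- `σ^(a 0)_1 ⋯ σ^(a (l-1))_l` acting on the first `l` qubits of an `n`-qubit chain. -/
def pauliBlock (n l : ℕ) (a : Fin l → Fin 4) :
    Matrix (Fin n → Fin 2) (Fin n → Fin 2) ℂ :=
  fun x y => ∏ i, if h : i.1 < l then pauli (a ⟨i.1, h⟩) (x i) (y i)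
    else (if x i = y i then 1 else 0)

/-- The cyclic translation operator `T` on `n` qubits. -/
def transOp (n : ℕ) : Matrix (Fin n → Fin 2) (Fin n → Fin 2) ℂ :=
  fun x y => if ∀ i, y i = x (cycSucc i) then 1 else 0

/-- Combine a configuration of the first `l` qubits with one of the last `n - l`. -/
def glue (n l : ℕ) (u : Fin l → Fin 2) (w : Fin (n - l) → Fin 2) : Fin n → Fin 2 :=
  fun i => if h : i.1 < l then u ⟨i.1, h⟩ else w ⟨i.1 - l, by have := i.isLt; omega⟩

/-- Reduced density matrix of the pure state `ψ` on the first `l` qubits. -/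
def redDM (n l : ℕ) (ψ : (Fin n → Fin 2) → ℂ) :
    Matrix (Fin l → Fin 2) (Fin l → Fin 2) ℂ :=
  fun u v => ∑ w, ψ (glue n l u w) * (starRingEnd ℂ) (ψ (glue n l v w))

set_option linter.unusedSectionVars false

namespace APaux

lemma pauli_sum_sq (b c : Fin 4) :
    ∑ u : Fin 2, ∑ v : Fin 2, pauli b u v * (starRingEnd ℂ) (pauli c u v)
      = if b = c then 2 else 0 := by
  fin_cases b <;> fin_cases c <;>
    simp [pauli, Fin.sum_univ_two, Matrix.one_apply] <;> norm_num [Complex.ext_iff]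

lemma pauli_complete (u v u' v' : Fin 2) :
    ∑ a : Fin 4, pauli a u v * (starRingEnd ℂ) (pauli a u' v')
      = (if u = u' ∧ v = v' then 2 else 0) := by
  fin_cases u <;> fin_cases v <;> fin_cases u' <;> fin_cases v' <;>
    simp [pauli, Fin.sum_univ_four, Matrix.one_apply] <;> norm_num [Complex.ext_iff]

lemma prod_delta {ι β : Type*} [Fintype ι] [DecidableEq β] (w w' : ι → β) :
    (∏ j, if w j = w' j then (1:ℂ) else 0) = if w = w' then 1 else 0 := by
  by_cases h : w = w'
  · simp [h]
  · obtain ⟨j, hj⟩ := Function.ne_iff.mp h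
    rw [if_neg h]
    exact Finset.prod_eq_zero (mem_univ j) (if_neg hj)

lemma sum_prod_pi {ι κ : Type*} [Fintype ι] [DecidableEq ι] [Fintype κ] [DecidableEq κ]
    (H : ι → κ → ℂ) :
    (∑ x : ι → κ, ∏ j, H j (x j)) = ∏ j, ∑ u, H j u := by
  rw [Finset.prod_univ_sum]
  rw [← Fintype.piFinset_univ]

lemma tensor_complete (l : ℕ) (x y x' y' : Fin l → Fin 2) :
    ∑ a : Fin l → Fin 4, pauliTensor l a x y * (starRingEnd ℂ) (pauliTensor l a x' y')
      = if x = x' ∧ y = y' then (2:ℂ)^l else 0 := by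
  have h1 : ∀ a : Fin l → Fin 4, pauliTensor l a x y * (starRingEnd ℂ) (pauliTensor l a x' y')
      = ∏ i, (pauli (a i) (x i) (y i) * (starRingEnd ℂ) (pauli (a i) (x' i) (y' i))) := by
    intro a
    rw [pauliTensor, pauliTensor, map_prod, Finset.prod_mul_distrib]
  simp_rw [h1]
  rw [sum_prod_pi (fun i c => pauli c (x i) (y i) * (starRingEnd ℂ) (pauli c (x' i) (y' i)))]
  simp_rw [pauli_complete]
  by_cases h : x = x' ∧ y = y'
  · simp [h.1, h.2, Finset.prod_const]
  · rw [if_neg h]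
    have : ∃ i, ¬ (x i = x' i ∧ y i = y' i) := by
      by_contra hc
      push_neg at hc
      exact h ⟨funext fun i => (hc i).1, funext fun i => (hc i).2⟩
    obtain ⟨i, hi⟩ := this
    exact Finset.prod_eq_zero (mem_univ i) (if_neg hi)

lemma parseval (l : ℕ) (M : Matrix (Fin l → Fin 2) (Fin l → Fin 2) ℂ)
    (hM : ∀ u v, M u v = (starRingEnd ℂ) (M v u)) :
    (2:ℂ)^l * Matrix.trace (M * M)
      = ∑ a : Fin l → Fin 4, (Complex.normSq (Matrix.trace (pauliTensor l a * M)) : ℂ) := by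
  have ht : ∀ a, Matrix.trace (pauliTensor l a * M)
      = ∑ p : (Fin l → Fin 2) × (Fin l → Fin 2), pauliTensor l a p.1 p.2 * M p.2 p.1 := by
    intro a
    rw [Matrix.trace, Fintype.sum_prod_type]
    simp [Matrix.diag, Matrix.mul_apply]
  simp_rw [← Complex.mul_conj, ht]
  have expand : ∀ a : Fin l → Fin 4,
      (∑ p : (Fin l → Fin 2) × (Fin l → Fin 2), pauliTensor l a p.1 p.2 * M p.2 p.1) *
      (starRingEnd ℂ) (∑ q : (Fin l → Fin 2) × (Fin l → Fin 2), pauliTensor l a q.1 q.2 * M q.2 q.1)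
      = ∑ p : (Fin l → Fin 2) × (Fin l → Fin 2), ∑ q : (Fin l → Fin 2) × (Fin l → Fin 2),
          (pauliTensor l a p.1 p.2 * (starRingEnd ℂ) (pauliTensor l a q.1 q.2)) *
          (M p.2 p.1 * (starRingEnd ℂ) (M q.2 q.1)) := by
    intro a
    rw [map_sum, Finset.sum_mul_sum]
    apply Finset.sum_congr rfl; intro p _
    apply Finset.sum_congr rfl; intro q _
    rw [RingHom.map_mul]; ring
  simp_rw [expand]
  rw [Finset.sum_comm]
  have swap2 : ∀ p : (Fin l → Fin 2) × (Fin l → Fin 2),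
      (∑ a : Fin l → Fin 4, ∑ q : (Fin l → Fin 2) × (Fin l → Fin 2),
        (pauliTensor l a p.1 p.2 * (starRingEnd ℂ) (pauliTensor l a q.1 q.2)) *
          (M p.2 p.1 * (starRingEnd ℂ) (M q.2 q.1)))
      = ∑ q : (Fin l → Fin 2) × (Fin l → Fin 2),
          (if p.1 = q.1 ∧ p.2 = q.2 then (2:ℂ)^l else 0) * (M p.2 p.1 * (starRingEnd ℂ) (M q.2 q.1)) := by
    intro p
    rw [Finset.sum_comm]
    apply Finset.sum_congr rfl; intro q _
    rw [← Finset.sum_mul, tensor_complete]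
  simp_rw [swap2]
  have collapse : ∀ p : (Fin l → Fin 2) × (Fin l → Fin 2),
      (∑ q : (Fin l → Fin 2) × (Fin l → Fin 2),
        (if p.1 = q.1 ∧ p.2 = q.2 then (2:ℂ)^l else 0) * (M p.2 p.1 * (starRingEnd ℂ) (M q.2 q.1)))
      = (2:ℂ)^l * (M p.2 p.1 * (starRingEnd ℂ) (M p.2 p.1)) := by
    intro p
    have hc : ∀ q : (Fin l → Fin 2) × (Fin l → Fin 2),
        (if p.1 = q.1 ∧ p.2 = q.2 then (2:ℂ)^l else 0) * (M p.2 p.1 * (starRingEnd ℂ) (M q.2 q.1))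
        = if q = p then (2:ℂ)^l * (M p.2 p.1 * (starRingEnd ℂ) (M q.2 q.1)) else 0 := by
      intro q
      by_cases h : q = p
      · subst h; simp
      · rw [if_neg h, if_neg, zero_mul]
        intro hc; exact h (Prod.ext hc.1.symm hc.2.symm)
    simp_rw [hc]
    rw [Finset.sum_ite_eq' univ p]
    simp
  simp_rw [collapse]
  rw [← Finset.mul_sum]
  congr 1
  rw [Matrix.trace, Fintype.sum_prod_type]
  simp only [Matrix.diag, Matrix.mul_apply]
  rw [Finset.sum_comm]
  apply Finset.sum_congr rfl; intro u _
  apply Finset.sum_congr rfl; intro v _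
  rw [← hM]

def e0 (n l : ℕ) (hl : l ≤ n) : (Fin l ⊕ Fin (n-l)) ≃ Fin n :=
  finSumFinEquiv.trans (finCongr (by omega))

lemma e0_inl_val (n l : ℕ) (hl : l ≤ n) (i : Fin l) : ((e0 n l hl) (Sum.inl i)).1 = i.1 := rfl

lemma e0_inr_val (n l : ℕ) (hl : l ≤ n) (j : Fin (n-l)) :
    ((e0 n l hl) (Sum.inr j)).1 = l + j.1 := rfl

lemma glue_e0_inl (n l : ℕ) (hl : l ≤ n) (u : Fin l → Fin 2) (w : Fin (n-l) → Fin 2)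
    (i : Fin l) : glue n l u w ((e0 n l hl) (Sum.inl i)) = u i := by
  have h : ((e0 n l hl) (Sum.inl i)).1 < l := by rw [e0_inl_val]; exact i.2
  rw [glue, dif_pos h]
  exact congrArg u (Fin.ext (e0_inl_val n l hl i))

lemma glue_e0_inr (n l : ℕ) (hl : l ≤ n) (u : Fin l → Fin 2) (w : Fin (n-l) → Fin 2)
    (j : Fin (n-l)) : glue n l u w ((e0 n l hl) (Sum.inr j)) = w j := by
  have h : ¬ ((e0 n l hl) (Sum.inr j)).1 < l := by rw [e0_inr_val]; omega
  rw [glue, dif_neg h]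
  congr 1
  apply Fin.ext
  simp [e0_inr_val]

def glueEquiv (n l : ℕ) (hl : l ≤ n) :
    ((Fin l → Fin 2) × (Fin (n-l) → Fin 2)) ≃ (Fin n → Fin 2) where
  toFun p := glue n l p.1 p.2
  invFun x := (fun i => x ((e0 n l hl) (Sum.inl i)), fun j => x ((e0 n l hl) (Sum.inr j)))
  left_inv := by
    rintro ⟨u, w⟩
    refine Prod.ext (funext fun i => ?_) (funext fun j => ?_)
    · exact glue_e0_inl n l hl u w i
    · exact glue_e0_inr n l hl u w j
  right_inv := by
    intro x
    funext i
    obtain ⟨s, rfl⟩ : ∃ s, (e0 n l hl) s = i := ⟨(e0 n l hl).symm i, Equiv.apply_symm_apply _ _⟩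
    cases s with
    | inl i' => exact glue_e0_inl n l hl _ _ i'
    | inr j' => exact glue_e0_inr n l hl _ _ j'

lemma sum_glue (n l : ℕ) (hl : l ≤ n) (F : (Fin n → Fin 2) → ℂ) :
    ∑ x, F x = ∑ u : Fin l → Fin 2, ∑ w : Fin (n-l) → Fin 2, F (glue n l u w) := by
  rw [← Equiv.sum_comp (glueEquiv n l hl) F, Fintype.sum_prod_type]
  rfl

lemma pauliBlock_glue (n l : ℕ) (hl : l ≤ n) (a : Fin l → Fin 4)
    (u v : Fin l → Fin 2) (w w' : Fin (n-l) → Fin 2) :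
    pauliBlock n l a (glue n l u w) (glue n l v w')
      = pauliTensor l a u v * (if w = w' then 1 else 0) := by
  rw [pauliBlock, ← Equiv.prod_comp (e0 n l hl), Fintype.prod_sum_type]
  rw [pauliTensor, ← prod_delta w w']
  congr 1
  · apply Finset.prod_congr rfl; intro i _
    have h : ((e0 n l hl) (Sum.inl i)).1 < l := by rw [e0_inl_val]; exact i.2
    rw [dif_pos h, glue_e0_inl, glue_e0_inl]
    exact congrArg (fun t => pauli (a t) (u i) (v i)) (Fin.ext (e0_inl_val n l hl i))
  · apply Finset.prod_congr rfl; intro j _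
    have h : ¬ ((e0 n l hl) (Sum.inr j)).1 < l := by rw [e0_inr_val]; omega
    rw [dif_neg h, glue_e0_inr, glue_e0_inr]

lemma trace_pauli_red (n l : ℕ) (hl : l ≤ n) (a : Fin l → Fin 4)
    (ψ : (Fin n → Fin 2) → ℂ) :
    Matrix.trace (pauliTensor l a * redDM n l ψ)
      = star ψ ⬝ᵥ (pauliBlock n l a *ᵥ ψ) := by
  have hrhs : star ψ ⬝ᵥ (pauliBlock n l a *ᵥ ψ)
      = ∑ x, (starRingEnd ℂ) (ψ x) * ∑ y, pauliBlock n l a x y * ψ y := by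
    simp [dotProduct, Matrix.mulVec, Complex.star_def]
  rw [hrhs]
  rw [sum_glue n l hl]
  have hin : ∀ (u : Fin l → Fin 2) (w : Fin (n-l) → Fin 2),
      (∑ y, pauliBlock n l a (glue n l u w) y * ψ y)
      = ∑ v, pauliTensor l a u v * ψ (glue n l v w) := by
    intro u w
    rw [sum_glue n l hl]
    apply Finset.sum_congr rfl; intro v _
    simp_rw [pauliBlock_glue n l hl, mul_ite, mul_one, mul_zero, ite_mul, zero_mul]
    rw [Finset.sum_ite_eq univ w]
    simp
  simp_rw [hin]
  rw [Matrix.trace]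
  simp only [Matrix.diag, Matrix.mul_apply, redDM]
  apply Finset.sum_congr rfl; intro u _
  simp_rw [Finset.mul_sum]
  rw [Finset.sum_comm]
  apply Finset.sum_congr rfl; intro w _
  apply Finset.sum_congr rfl; intro v _
  ring

section Shift
variable (n : ℕ) [NeZero n]

lemma cycSucc_eq (i : Fin n) : cycSucc i = i + 1 := by
  apply Fin.ext
  show (i.1 + 1) % n = _
  rw [Fin.add_def, Fin.val_one']
  conv_lhs => rw [Nat.add_mod i.1 1 n, Nat.mod_eq_of_lt i.2]

def shiftEquiv' (c : Fin n) : (Fin n → Fin 2) ≃ (Fin n → Fin 2) where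
  toFun x := fun i => x (i + c)
  invFun x := fun i => x (i - c)
  left_inv := by
    intro x
    funext i
    show x (i - c + c) = x i
    have h : i - c + c = i := by abel
    rw [h]
  right_inv := by
    intro x
    funext i
    show x (i + c - c) = x i
    have h : i + c - c = i := by abel
    rw [h]

lemma sum_shift (c : Fin n) (g : (Fin n → Fin 2) → ℂ) :
    ∑ x : Fin n → Fin 2, g (fun i => x (i + c)) = ∑ x, g x :=
  Equiv.sum_comp (shiftEquiv' n c) g

variable {n}

lemma eig_step (ψ : (Fin n → Fin 2) → ℂ) (mu : ℂ) (h : transOp n *ᵥ ψ = mu • ψ) :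
    ∀ x, ψ (fun i => x (i + 1)) = mu * ψ x := by
  intro x
  have hx := congrFun h x
  rw [Pi.smul_apply, smul_eq_mul] at hx
  rw [← hx]
  show _ = ∑ y, transOp n x y * ψ y
  have hc : ∀ y : Fin n → Fin 2, (∀ i, y i = x (cycSucc i)) ↔ y = fun i => x (i + 1) := by
    intro y
    rw [funext_iff]
    exact forall_congr' fun i => by rw [cycSucc_eq]
  simp_rw [transOp, hc, ite_mul, one_mul, zero_mul]
  rw [Finset.sum_ite_eq' univ (fun i => x (i + 1)) ψ]
  simp

open Fin.CommRing in
lemma eig_pow (ψ : (Fin n → Fin 2) → ℂ) (mu : ℂ) (h : transOp n *ᵥ ψ = mu • ψ) :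
    ∀ (d : ℕ) (x : Fin n → Fin 2), ψ (fun i => x (i + (d : Fin n))) = mu ^ d * ψ x := by
  intro d
  induction d with
  | zero => intro x; simp
  | succ d ih =>
    intro x
    have hfe : (fun i => x (i + ((d+1 : ℕ) : Fin n)))
        = fun i => (fun j => x (j + 1)) (i + (d : Fin n)) := by
      funext i
      apply congrArg x
      push_cast
      ring
    rw [hfe, ih (fun j => x (j + 1)), eig_step ψ mu h x]
    ring

lemma mu_unit (ψ : (Fin n → Fin 2) → ℂ) (mu : ℂ) (h : transOp n *ᵥ ψ = mu • ψ)
    (hnorm : ∑ x, (starRingEnd ℂ) (ψ x) * ψ x = 1) :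
    (starRingEnd ℂ) mu * mu = 1 := by
  have h2 : ∑ x : Fin n → Fin 2,
      (starRingEnd ℂ) (ψ (fun i => x (i + 1))) * ψ (fun i => x (i + 1))
      = ∑ x, (starRingEnd ℂ) (ψ x) * ψ x :=
    sum_shift n 1 (fun x => (starRingEnd ℂ) (ψ x) * ψ x)
  rw [hnorm] at h2
  calc (starRingEnd ℂ) mu * mu
      = ∑ x, ((starRingEnd ℂ) mu * mu) * ((starRingEnd ℂ) (ψ x) * ψ x) := by
        rw [← Finset.mul_sum, hnorm, mul_one]
    _ = 1 := by
        rw [← h2]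
        apply Finset.sum_congr rfl; intro x _
        rw [eig_step ψ mu h x, RingHom.map_mul]
        ring

end Shift

section Comb
variable {n : ℕ} [NeZero n]

open Fin.CommRing in
lemma comb (l : ℕ) (hln : 2 * l < n) (b : Fin n → Fin 4)
    (hb : ∀ j : Fin n, l ≤ j.1 → b j = 0) (m : Fin n) (hbm : b m ≠ 0)
    (d : Fin n) (hd : d ≠ 0) (hinv : ∀ j, b (j + d) = b j) : False := by
  have hn : 0 < n := Nat.pos_of_ne_zero (NeZero.ne n)
  have hiter : ∀ (k : ℕ) (j : Fin n), b (j + k • d) = b j := by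
    intro k
    induction k with
    | zero => intro j; simp
    | succ k ih =>
      intro j
      rw [succ_nsmul, ← add_assoc, hinv (j + k • d), ih j]
  have hd1 : 0 < d.1 := by
    rcases Nat.eq_zero_or_pos d.1 with h | h
    · exact absurd (Fin.ext (by simp [h])) hd
    · exact h
  set g := Nat.gcd d.1 n with hgdef
  have hg0 : 0 < g := Nat.gcd_pos_of_pos_left n hd1
  have hgd : g ≤ d.1 := Nat.gcd_le_left n hd1
  have hgn : g < n := lt_of_le_of_lt hgd d.2
  obtain ⟨s, hs⟩ : g ∣ n := Nat.gcd_dvd_right d.1 n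
  have hs2 : 2 ≤ s := by
    by_contra hcon
    push_neg at hcon
    interval_cases s <;> omega
  -- Bezout
  set A := Int.gcdA d.1 n with hA
  have h1 : (g : ℤ) = (d.1 : ℤ) * A + (n : ℤ) * Int.gcdB d.1 n := by
    rw [hgdef, ← Int.gcd_natCast_natCast]
    exact Int.gcd_eq_gcd_ab _ _
  have h2 : ((g : ℤ) : Fin n) = ((d.1 : ℤ) : Fin n) * ((A : ℤ) : Fin n)
      + ((n : ℤ) : Fin n) * ((Int.gcdB d.1 n : ℤ) : Fin n) := by
    rw [h1]; push_cast; ring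
  have h3 : (g : Fin n) = ((A : ℤ) : Fin n) * d := by
    rw [Int.cast_natCast] at h2
    rw [h2]
    have e1 : ((d.1 : ℤ) : Fin n) = d := by
      rw [Int.cast_natCast, Fin.cast_val_eq_self]
    have e2 : ((n : ℤ) : Fin n) = 0 := by
      rw [Int.cast_natCast, Fin.natCast_self]
    rw [e1, e2]
    ring
  set k₀ := ((A : ℤ) : Fin n).val with hk0
  have h4 : (g : Fin n) = k₀ • d := by
    rw [nsmul_eq_mul, hk0, Fin.cast_val_eq_self]
    exact h3
  have hG : ∀ (K : ℕ) (j : Fin n), b (j + K • (g : Fin n)) = b j := by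
    intro K j
    rw [h4, smul_smul]
    exact hiter (K * k₀) j
  -- arithmetic
  set q := m.1 / g with hq
  set r := m.1 % g with hr
  set s' := s - 1 with hs'
  have hs'1 : 1 ≤ s' := by omega
  have hn' : n = g * s' + g := by
    rw [hs, show s = s' + 1 by omega]; ring
  set K := (q + 1) * s' with hK
  set t := r + g * s' with ht
  have hrg : r < g := Nat.mod_lt _ hg0
  have hm1 : m.1 = g * q + r := by
    rw [hq, hr]; exact (Nat.div_add_mod m.1 g).symm
  have harith : m.1 + K * g = t + q * n := by
    rw [hm1, hn', hK, ht]; ring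
  have htn : t < n := by
    rw [hn', ht]
    calc r + g * s' < g + g * s' := Nat.add_lt_add_right hrg _
      _ = g * s' + g := by ring
  have hval : (m + K • (g : Fin n)).val = t := by
    have e1 : K • (g : Fin n) = ((K * g : ℕ) : Fin n) := by
      rw [nsmul_eq_mul]; push_cast; ring
    rw [e1, Fin.add_def, Fin.val_natCast]
    show (m.1 + (K * g) % n) % n = t
    rw [Nat.add_mod_mod, harith, Nat.add_mul_mod_self_right, Nat.mod_eq_of_lt htn]
  have hlt : t < l := by
    by_contra hcon
    push_neg at hcon
    apply hbm
    rw [← hG K m]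
    exact hb _ (by rw [hval]; exact hcon)
  -- contradiction
  have h5 : g ≤ g * s' := Nat.le_mul_of_pos_right g hs'1
  have : l < t := by
    have : 2 * l < g * s' + g := by rw [← hn']; exact hln
    rw [ht]
    omega
  omega
end Comb

section Blocks
variable (n l : ℕ) [NeZero n]

def bfun (a : Fin l → Fin 4) : Fin n → Fin 4 :=
  fun j => if h : j.1 < l then a ⟨j.1, h⟩ else 0

lemma pauli_zero : pauli 0 = 1 := rfl

lemma pauliBlock_eq (a : Fin l → Fin 4) (x y : Fin n → Fin 2) :
    pauliBlock n l a x y = ∏ i, pauli (bfun n l a i) (x i) (y i) := by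
  rw [pauliBlock]
  apply Finset.prod_congr rfl; intro i _
  by_cases h : i.1 < l
  · simp only [bfun]; rw [dif_pos h, dif_pos h]
  · simp only [bfun]; rw [dif_neg h, dif_neg h, pauli_zero, Matrix.one_apply]

def shiftBlock (a : Fin l → Fin 4) (c : Fin n) :
    Matrix (Fin n → Fin 2) (Fin n → Fin 2) ℂ :=
  fun x y => pauliBlock n l a (fun i => x (i + c)) (fun i => y (i + c))

lemma shiftBlock_apply (a : Fin l → Fin 4) (c : Fin n) (x y : Fin n → Fin 2) :
    shiftBlock n l a c x y = ∏ j, pauli (bfun n l a (j - c)) (x j) (y j) := by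
  rw [shiftBlock, pauliBlock_eq]
  apply Fintype.prod_equiv (Equiv.addRight c)
    (fun i => pauli (bfun n l a i) (x (i + c)) (y (i + c)))
    (fun j => pauli (bfun n l a (j - c)) (x j) (y j))
  intro i
  simp only [Equiv.coe_addRight]
  have h : i + c - c = i := by abel
  rw [h]

lemma shiftBlock_zero (a : Fin l → Fin 4) : shiftBlock n l a 0 = pauliBlock n l a := by
  funext x y
  rw [shiftBlock]
  simp

lemma trace_shiftBlock (a : Fin l → Fin 4) (c e : Fin n) :
    Matrix.trace (shiftBlock n l a c * (shiftBlock n l a e)ᴴ)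
      = ∏ j : Fin n, (if bfun n l a (j - c) = bfun n l a (j - e) then (2:ℂ) else 0) := by
  rw [Matrix.trace]
  simp only [Matrix.diag, Matrix.mul_apply, Matrix.conjTranspose_apply, RCLike.star_def]
  simp_rw [shiftBlock_apply]
  have hsplit : ∀ x y : Fin n → Fin 2,
      (∏ j, pauli (bfun n l a (j - c)) (x j) (y j)) *
        (starRingEnd ℂ) (∏ j, pauli (bfun n l a (j - e)) (x j) (y j))
      = ∏ j, (pauli (bfun n l a (j - c)) (x j) (y j) *
          (starRingEnd ℂ) (pauli (bfun n l a (j - e)) (x j) (y j))) := by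
    intro x y
    rw [map_prod (starRingEnd ℂ), Finset.prod_mul_distrib]
  simp_rw [hsplit]
  have hy : ∀ x : Fin n → Fin 2,
      (∑ y : Fin n → Fin 2, ∏ j, (pauli (bfun n l a (j - c)) (x j) (y j) *
          (starRingEnd ℂ) (pauli (bfun n l a (j - e)) (x j) (y j))))
      = ∏ j, ∑ v : Fin 2, (pauli (bfun n l a (j - c)) (x j) v *
          (starRingEnd ℂ) (pauli (bfun n l a (j - e)) (x j) v)) := by
    intro x
    exact sum_prod_pi (fun j v => pauli (bfun n l a (j - c)) (x j) v *
      (starRingEnd ℂ) (pauli (bfun n l a (j - e)) (x j) v))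
  simp_rw [hy]
  rw [sum_prod_pi (fun j u => ∑ v : Fin 2, (pauli (bfun n l a (j - c)) u v *
          (starRingEnd ℂ) (pauli (bfun n l a (j - e)) u v)))]
  apply Finset.prod_congr rfl; intro j _
  exact pauli_sum_sq _ _

lemma trace_shiftBlock_same (a : Fin l → Fin 4) (c : Fin n) :
    Matrix.trace (shiftBlock n l a c * (shiftBlock n l a c)ᴴ) = (2:ℂ)^n := by
  rw [trace_shiftBlock]
  calc (∏ j : Fin n, if bfun n l a (j - c) = bfun n l a (j - c) then (2:ℂ) else 0)
      = ∏ _j : Fin n, (2:ℂ) := Finset.prod_congr rfl (fun j _ => if_pos rfl)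
    _ = (2:ℂ)^n := by rw [Finset.prod_const, Finset.card_univ, Fintype.card_fin]

lemma trace_shiftBlock_ne (hln : 2 * l < n) (a : Fin l → Fin 4) (ha : a ≠ fun _ => 0)
    (c e : Fin n) (hce : c ≠ e) :
    Matrix.trace (shiftBlock n l a c * (shiftBlock n l a e)ᴴ) = 0 := by
  rw [trace_shiftBlock]
  have hex : ∃ j : Fin n, bfun n l a (j - c) ≠ bfun n l a (j - e) := by
    by_contra hcon
    push_neg at hcon
    obtain ⟨i, hi⟩ := Function.ne_iff.mp ha
    have hm : (⟨i.1, lt_of_lt_of_le i.2 (by omega)⟩ : Fin n).1 < l := i.2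
    refine comb l hln (bfun n l a) ?_ ⟨i.1, lt_of_lt_of_le i.2 (by omega)⟩ ?_ (c - e)
      (sub_ne_zero.mpr hce) ?_
    · intro j hj
      simp only [bfun]
      rw [dif_neg (by omega)]
    · simp only [bfun]
      rw [dif_pos hm]
      convert hi using 2
    · intro j
      have h1 := hcon (j + c)
      have e1 : j + c - c = j := by abel
      have e2 : j + c - e = j + (c - e) := by abel
      rw [e1, e2] at h1
      exact h1.symm
  obtain ⟨j, hj⟩ := hex
  exact Finset.prod_eq_zero (mem_univ j) (if_neg hj)

open Fin.CommRing in
lemma exp_shiftBlock (a : Fin l → Fin 4) (c : Fin n)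
    (ψ : (Fin n → Fin 2) → ℂ) (mu : ℂ) (h : transOp n *ᵥ ψ = mu • ψ)
    (hnorm : ∑ x, (starRingEnd ℂ) (ψ x) * ψ x = 1) :
    (∑ x, (starRingEnd ℂ) (ψ x) * ∑ y, shiftBlock n l a c x y * ψ y)
      = ∑ x, (starRingEnd ℂ) (ψ x) * ∑ y, pauliBlock n l a x y * ψ y := by
  have hmu := mu_unit ψ mu h hnorm
  have hmud : (starRingEnd ℂ) (mu ^ c.val) * mu ^ c.val = 1 := by
    rw [map_pow, ← mul_pow, hmu, one_pow]
  have hpoint : ∀ x y : Fin n → Fin 2,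
      (starRingEnd ℂ) (ψ x) * ψ y
        = (starRingEnd ℂ) (ψ (fun i => x (i + c))) * ψ (fun i => y (i + c)) := by
    intro x y
    have hc : ((c.val : ℕ) : Fin n) = c := Fin.cast_val_eq_self c
    rw [← hc, eig_pow ψ mu h c.val x, eig_pow ψ mu h c.val y, RingHom.map_mul]
    rw [show (starRingEnd ℂ) (mu ^ c.val) * (starRingEnd ℂ) (ψ x) * (mu ^ c.val * ψ y)
      = ((starRingEnd ℂ) (mu ^ c.val) * mu ^ c.val) * ((starRingEnd ℂ) (ψ x) * ψ y) from by ring,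
      hmud, one_mul]
  have hterm : ∀ x y : Fin n → Fin 2,
      (starRingEnd ℂ) (ψ x) * (shiftBlock n l a c x y * ψ y)
        = (starRingEnd ℂ) (ψ (fun i => x (i + c))) *
            (pauliBlock n l a (fun i => x (i + c)) (fun i => y (i + c)) *
              ψ (fun i => y (i + c))) := by
    intro x y
    rw [shiftBlock]
    rw [show (starRingEnd ℂ) (ψ x) * (pauliBlock n l a (fun i => x (i + c)) (fun i => y (i + c)) * ψ y)
      = pauliBlock n l a (fun i => x (i + c)) (fun i => y (i + c)) * ((starRingEnd ℂ) (ψ x) * ψ y) from by ring,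
      hpoint x y]
    ring
  calc (∑ x, (starRingEnd ℂ) (ψ x) * ∑ y, shiftBlock n l a c x y * ψ y)
      = ∑ x : Fin n → Fin 2, ∑ y : Fin n → Fin 2,
          (starRingEnd ℂ) (ψ x) * (shiftBlock n l a c x y * ψ y) := by
        simp_rw [Finset.mul_sum]
    _ = ∑ x : Fin n → Fin 2, ∑ y : Fin n → Fin 2,
          (starRingEnd ℂ) (ψ (fun i => x (i + c))) *
            (pauliBlock n l a (fun i => x (i + c)) (fun i => y (i + c)) *
              ψ (fun i => y (i + c))) := by
        apply Finset.sum_congr rfl; intro x _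
        apply Finset.sum_congr rfl; intro y _
        exact hterm x y
    _ = ∑ x : Fin n → Fin 2, ∑ y : Fin n → Fin 2,
          (starRingEnd ℂ) (ψ (fun i => x (i + c))) *
            (pauliBlock n l a (fun i => x (i + c)) y * ψ y) := by
        apply Finset.sum_congr rfl; intro x _
        exact sum_shift n c (fun y => (starRingEnd ℂ) (ψ (fun i => x (i + c))) *
            (pauliBlock n l a (fun i => x (i + c)) y * ψ y))
    _ = ∑ x : Fin n → Fin 2, ∑ y : Fin n → Fin 2,
          (starRingEnd ℂ) (ψ x) * (pauliBlock n l a x y * ψ y) := by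
        exact sum_shift n c (fun x => ∑ y : Fin n → Fin 2,
          (starRingEnd ℂ) (ψ x) * (pauliBlock n l a x y * ψ y))
    _ = ∑ x, (starRingEnd ℂ) (ψ x) * ∑ y, pauliBlock n l a x y * ψ y := by
        simp_rw [Finset.mul_sum]

end Blocks

lemma diag_bound {N K : Type*} [Fintype N] [DecidableEq N] [Fintype K] [DecidableEq K]
    (hcard : Fintype.card N = Fintype.card K)
    (ψ : K → N → ℂ) (horth : ∀ j k, star (ψ j) ⬝ᵥ ψ k = if j = k then 1 else 0)
    (M : Matrix N N ℂ) :
    ∑ k : K, Complex.normSq (star (ψ k) ⬝ᵥ (M *ᵥ ψ k)) ≤ (Matrix.trace (M * Mᴴ)).re := by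
  set U : Matrix N K ℂ := Matrix.of fun x k => ψ k x with hUdef
  have hU : Uᴴ * U = 1 := by
    ext j k
    have h := horth j k
    simp only [dotProduct, Pi.star_apply, RCLike.star_def] at h
    simp only [Matrix.mul_apply, Matrix.conjTranspose_apply, Matrix.one_apply, hUdef,
      Matrix.of_apply, RCLike.star_def]
    exact h
  have hUU : U * Uᴴ = 1 := (Matrix.mul_eq_one_comm_of_equiv
    (Fintype.equivOfCardEq hcard)).mpr hU
  set D : Matrix K K ℂ := Uᴴ * M * U with hDdef
  have hdiag : ∀ k, D k k = star (ψ k) ⬝ᵥ (M *ᵥ ψ k) := by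
    intro k
    simp only [hDdef, Matrix.mul_apply, Matrix.conjTranspose_apply, dotProduct,
      Matrix.mulVec, Pi.star_apply, RCLike.star_def, hUdef, Matrix.of_apply]
    simp_rw [Finset.sum_mul, Finset.mul_sum]
    rw [Finset.sum_comm]
    apply Finset.sum_congr rfl; intro x _
    apply Finset.sum_congr rfl; intro y _
    ring
  have hDH : D * Dᴴ = Uᴴ * (M * Mᴴ) * U := by
    rw [hDdef]
    rw [Matrix.conjTranspose_mul, Matrix.conjTranspose_mul, Matrix.conjTranspose_conjTranspose]
    calc Uᴴ * M * U * (Uᴴ * (Mᴴ * U)) = Uᴴ * M * (U * Uᴴ) * (Mᴴ * U) := by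
          noncomm_ring [Matrix.mul_assoc]
      _ = Uᴴ * (M * Mᴴ) * U := by rw [hUU, Matrix.mul_one]; noncomm_ring [Matrix.mul_assoc]
  have htr : Matrix.trace (D * Dᴴ) = Matrix.trace (M * Mᴴ) := by
    rw [hDH, Matrix.mul_assoc, Matrix.trace_mul_comm, Matrix.mul_assoc, Matrix.mul_assoc, hUU]
    rw [Matrix.mul_one]
  have hsum : Matrix.trace (D * Dᴴ) = ((∑ j : K, ∑ k : K, Complex.normSq (D j k) : ℝ) : ℂ) := by
    rw [Matrix.trace]
    push_cast
    apply Finset.sum_congr rfl; intro j _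
    simp only [Matrix.diag, Matrix.mul_apply, Matrix.conjTranspose_apply, RCLike.star_def]
    apply Finset.sum_congr rfl; intro k _
    rw [Complex.mul_conj]
  have hre : (Matrix.trace (M * Mᴴ)).re = ∑ j : K, ∑ k : K, Complex.normSq (D j k) := by
    rw [← htr, hsum, Complex.ofReal_re]
  rw [hre]
  calc ∑ k : K, Complex.normSq (star (ψ k) ⬝ᵥ (M *ᵥ ψ k))
      = ∑ k : K, Complex.normSq (D k k) := by
        apply Finset.sum_congr rfl; intro k _; rw [hdiag]
    _ ≤ ∑ k : K, ∑ j : K, Complex.normSq (D j k) := by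
        apply Finset.sum_le_sum; intro k _
        exact Finset.single_le_sum (f := fun j => Complex.normSq (D j k))
          (fun j _ => Complex.normSq_nonneg _) (mem_univ k)
    _ = ∑ j : K, ∑ k : K, Complex.normSq (D j k) := Finset.sum_comm

lemma dot_expand {N : Type*} [Fintype N] (φ : N → ℂ) (M : Matrix N N ℂ) :
    star φ ⬝ᵥ (M *ᵥ φ) = ∑ x, (starRingEnd ℂ) (φ x) * ∑ y, M x y * φ y := by
  simp only [dotProduct, Matrix.mulVec, Pi.star_apply, RCLike.star_def]

end APaux

open APaux

/-- Average eigenstate purity on the first `l` qubits, for a translationally invariant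
Hermitian operator `G` on `n` qubits with common orthonormal eigenbasis `ψ` with `T`:
`1/2^l ≤ 2^{-n} Σ_k Tr(ρ_{k,A}²) ≤ 1/2^l + 2^l/n`. -/
theorem average_purity_translation_invariant (n l : ℕ) (hln : 2 * l < n)
    (G : Matrix (Fin n → Fin 2) (Fin n → Fin 2) ℂ) (hG : G.IsHermitian)
    (hcomm : transOp n * G = G * transOp n)
    (ψ : Fin (2 ^ n) → ((Fin n → Fin 2) → ℂ))
    (horth : ∀ j k, star (ψ j) ⬝ᵥ ψ k = if j = k then 1 else 0)
    (lam : Fin (2 ^ n) → ℝ) (mu : Fin (2 ^ n) → ℂ)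
    (heigG : ∀ k, G *ᵥ ψ k = (lam k : ℂ) • ψ k)
    (heigT : ∀ k, transOp n *ᵥ ψ k = mu k • ψ k) :
    (1 : ℝ) / 2 ^ l ≤
        ((2 : ℝ) ^ n)⁻¹ *
          ∑ k, (Matrix.trace (redDM n l (ψ k) * redDM n l (ψ k))).re ∧
      ((2 : ℝ) ^ n)⁻¹ *
          ∑ k, (Matrix.trace (redDM n l (ψ k) * redDM n l (ψ k))).re ≤
        1 / 2 ^ l + 2 ^ l / n := by
  have hn0 : 0 < n := by omega
  haveI : NeZero n := ⟨by omega⟩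
  have hl : l ≤ n := by omega
  have hcard : Fintype.card (Fin n → Fin 2) = Fintype.card (Fin (2^n)) := by
    rw [Fintype.card_fun, Fintype.card_fin, Fintype.card_fin, Fintype.card_fin]
  have hnorm : ∀ k, ∑ x, (starRingEnd ℂ) (ψ k x) * ψ k x = 1 := by
    intro k
    have h := horth k k
    rw [if_pos rfl] at h
    simp only [dotProduct, Pi.star_apply, RCLike.star_def] at h
    exact h
  have hherm : ∀ k (u v : Fin l → Fin 2),
      redDM n l (ψ k) u v = (starRingEnd ℂ) (redDM n l (ψ k) v u) := by
    intro k u v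
    rw [redDM, redDM, map_sum]
    apply Finset.sum_congr rfl; intro w _
    rw [RingHom.map_mul, Complex.conj_conj]
    ring
  set E : Fin (2^n) → (Fin l → Fin 4) → ℂ :=
    fun k a => star (ψ k) ⬝ᵥ (pauliBlock n l a *ᵥ ψ k) with hEdef
  have purity : ∀ k, (Matrix.trace (redDM n l (ψ k) * redDM n l (ψ k))).re
      = ((2:ℝ)^l)⁻¹ * ∑ a : Fin l → Fin 4, Complex.normSq (E k a) := by
    intro k
    have h1 := parseval l (redDM n l (ψ k)) (hherm k)
    have h2 : ∀ a : Fin l → Fin 4,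
        Matrix.trace (pauliTensor l a * redDM n l (ψ k)) = E k a :=
      fun a => trace_pauli_red n l hl a (ψ k)
    simp_rw [h2] at h1
    have h3 : ((2:ℂ)^l) = (((2:ℝ)^l : ℝ) : ℂ) := by push_cast; ring
    have h4 : (∑ a : Fin l → Fin 4, (Complex.normSq (E k a) : ℂ))
        = ((∑ a : Fin l → Fin 4, Complex.normSq (E k a) : ℝ) : ℂ) := by push_cast; ring
    rw [h3, h4] at h1
    have h5 := congrArg Complex.re h1
    rw [Complex.re_ofReal_mul, Complex.ofReal_re] at h5
    have hpos : (0:ℝ) < (2:ℝ)^l := by positivity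
    field_simp
    linarith [h5]
  have hsum : (∑ k, (Matrix.trace (redDM n l (ψ k) * redDM n l (ψ k))).re)
      = ((2:ℝ)^l)⁻¹ * ∑ a : Fin l → Fin 4, ∑ k, Complex.normSq (E k a) := by
    simp_rw [purity]
    rw [← Finset.mul_sum]
    congr 1
    exact Finset.sum_comm
  have hblock0 : pauliBlock n l (fun _ => (0:Fin 4))
      = (1 : Matrix (Fin n → Fin 2) (Fin n → Fin 2) ℂ) := by
    funext x y
    rw [pauliBlock_eq]
    have hb : ∀ i : Fin n, bfun n l (fun _ => (0:Fin 4)) i = 0 := by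
      intro i; rw [bfun]; split <;> rfl
    calc (∏ i, pauli (bfun n l (fun _ => (0:Fin 4)) i) (x i) (y i))
        = ∏ i, if x i = y i then (1:ℂ) else 0 := by
          apply Finset.prod_congr rfl; intro i _
          rw [hb i, pauli_zero, Matrix.one_apply]
      _ = if x = y then 1 else 0 := prod_delta x y
      _ = (1 : Matrix (Fin n → Fin 2) (Fin n → Fin 2) ℂ) x y := (Matrix.one_apply).symm
  have hE0 : ∀ k, E k (fun _ => 0) = 1 := by
    intro k
    show star (ψ k) ⬝ᵥ (pauliBlock n l (fun _ => 0) *ᵥ ψ k) = 1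
    rw [hblock0, Matrix.one_mulVec]
    have h := horth k k
    rwa [if_pos rfl] at h
  have hF0 : (∑ k, Complex.normSq (E k (fun _ => 0))) = (2:ℝ)^n := by
    have h1 : ∀ k : Fin (2^n), Complex.normSq (E k (fun _ => 0)) = 1 := by
      intro k; rw [hE0 k, Complex.normSq_one]
    simp_rw [h1]
    rw [Finset.sum_const, Finset.card_univ, Fintype.card_fin, nsmul_eq_mul, mul_one]
    push_cast; ring
  have hFnn : ∀ a : Fin l → Fin 4, (0:ℝ) ≤ ∑ k, Complex.normSq (E k a) :=
    fun a => Finset.sum_nonneg fun k _ => Complex.normSq_nonneg _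
  have hbound : ∀ a : Fin l → Fin 4, a ≠ (fun _ => 0) →
      (∑ k, Complex.normSq (E k a)) ≤ 2^n / n := by
    intro a ha
    set M : Matrix (Fin n → Fin 2) (Fin n → Fin 2) ℂ := ∑ c : Fin n, shiftBlock n l a c
      with hMdef
    have hMexp : ∀ k, star (ψ k) ⬝ᵥ (M *ᵥ ψ k) = (n:ℂ) * E k a := by
      intro k
      rw [dot_expand]
      have hx : ∀ x : Fin n → Fin 2, (∑ y, M x y * ψ k y)
          = ∑ c : Fin n, ∑ y, shiftBlock n l a c x y * ψ k y := by
        intro x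
        rw [Finset.sum_comm]
        apply Finset.sum_congr rfl; intro y _
        rw [hMdef, Matrix.sum_apply, Finset.sum_mul]
      simp_rw [hx]
      have hx2 : ∀ x : Fin n → Fin 2,
          (starRingEnd ℂ) (ψ k x) * (∑ c : Fin n, ∑ y, shiftBlock n l a c x y * ψ k y)
          = ∑ c : Fin n, (starRingEnd ℂ) (ψ k x) * ∑ y, shiftBlock n l a c x y * ψ k y :=
        fun x => by rw [Finset.mul_sum]
      simp_rw [hx2]
      rw [Finset.sum_comm]
      calc (∑ c : Fin n, ∑ x, (starRingEnd ℂ) (ψ k x) * ∑ y, shiftBlock n l a c x y * ψ k y)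
          = ∑ c : Fin n, ∑ x, (starRingEnd ℂ) (ψ k x) * ∑ y, pauliBlock n l a x y * ψ k y := by
            apply Finset.sum_congr rfl; intro c _
            exact exp_shiftBlock n l a c (ψ k) (mu k) (heigT k) (hnorm k)
        _ = ∑ _c : Fin n, E k a := by
            apply Finset.sum_congr rfl; intro c _
            exact (dot_expand (ψ k) (pauliBlock n l a)).symm
        _ = (n:ℂ) * E k a := by
            rw [Finset.sum_const, Finset.card_univ, Fintype.card_fin, nsmul_eq_mul]
    have htrace : ∀ c e : Fin n,
        Matrix.trace (shiftBlock n l a c * (shiftBlock n l a e)ᴴ)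
          = if e = c then (2:ℂ)^n else 0 := by
      intro c e
      by_cases h : e = c
      · subst h; rw [if_pos rfl]; exact trace_shiftBlock_same n l a e
      · rw [if_neg h]; exact trace_shiftBlock_ne n l hln a ha c e (fun hce => h hce.symm)
    have hMtr : Matrix.trace (M * Mᴴ) = (n:ℂ) * 2^n := by
      rw [hMdef, Matrix.conjTranspose_sum, Matrix.sum_mul, Matrix.trace_sum]
      calc (∑ c : Fin n, Matrix.trace (shiftBlock n l a c * ∑ e : Fin n, (shiftBlock n l a e)ᴴ))
          = ∑ c : Fin n, ∑ e : Fin n,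
              Matrix.trace (shiftBlock n l a c * (shiftBlock n l a e)ᴴ) := by
            apply Finset.sum_congr rfl; intro c _
            rw [Matrix.mul_sum, Matrix.trace_sum]
        _ = ∑ _c : Fin n, (2:ℂ)^n := by
            apply Finset.sum_congr rfl; intro c _
            simp_rw [htrace c]
            rw [Finset.sum_ite_eq' univ c (fun _ => (2:ℂ)^n)]
            simp
        _ = (n:ℂ) * 2^n := by
            rw [Finset.sum_const, Finset.card_univ, Fintype.card_fin, nsmul_eq_mul]
    have hdb := diag_bound hcard ψ horth M
    have hre : (Matrix.trace (M * Mᴴ)).re = (n:ℝ) * 2^n := by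
      rw [hMtr]
      have h1 : ((n:ℂ) * 2^n) = (((n:ℝ) * 2^n : ℝ) : ℂ) := by push_cast; ring
      rw [h1, Complex.ofReal_re]
    rw [hre] at hdb
    have hsq : ∀ k, Complex.normSq (star (ψ k) ⬝ᵥ (M *ᵥ ψ k))
        = (n:ℝ) * n * Complex.normSq (E k a) := by
      intro k
      rw [hMexp k, Complex.normSq_mul, Complex.normSq_natCast]
    simp_rw [hsq] at hdb
    rw [← Finset.mul_sum] at hdb
    have hnR : (0:ℝ) < n := by exact_mod_cast hn0
    rw [le_div_iff₀ hnR]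
    nlinarith [hdb, hnR, hFnn a]
  have hT := Finset.add_sum_erase (univ : Finset (Fin l → Fin 4))
    (fun a => ∑ k, Complex.normSq (E k a)) (mem_univ (fun _ => (0:Fin 4)))
  have hge : (0:ℝ) ≤ ∑ a ∈ (univ : Finset (Fin l → Fin 4)).erase (fun _ => 0),
      ∑ k, Complex.normSq (E k a) :=
    Finset.sum_nonneg fun a _ => hFnn a
  have h2l : (0:ℝ) < 2^l := by positivity
  have h2n : (0:ℝ) < 2^n := by positivity
  have hnR : (0:ℝ) < n := by exact_mod_cast hn0
  constructor
  · rw [hsum]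
    have h1 : (2:ℝ)^n ≤ ∑ a : Fin l → Fin 4, ∑ k, Complex.normSq (E k a) := by
      have := hT
      linarith [hF0, hge]
    rw [one_div]
    calc ((2:ℝ)^l)⁻¹ = (2^n)⁻¹ * ((2^l)⁻¹ * 2^n) := by field_simp
      _ ≤ ((2:ℝ)^n)⁻¹ * ((2^l)⁻¹ * ∑ a : Fin l → Fin 4, ∑ k, Complex.normSq (E k a)) := by
          apply mul_le_mul_of_nonneg_left _ (by positivity)
          apply mul_le_mul_of_nonneg_left h1 (by positivity)
  · rw [hsum]
    have hcarde : ((univ : Finset (Fin l → Fin 4)).erase (fun _ => 0)).card = 4^l - 1 := by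
      rw [Finset.card_erase_of_mem (mem_univ _), Finset.card_univ, Fintype.card_fun,
        Fintype.card_fin, Fintype.card_fin]
    have herase : (∑ a ∈ (univ : Finset (Fin l → Fin 4)).erase (fun _ => 0),
        ∑ k, Complex.normSq (E k a)) ≤ ((4^l - 1 : ℕ) : ℝ) * (2^n / n) := by
      have h1 := Finset.sum_le_card_nsmul ((univ : Finset (Fin l → Fin 4)).erase (fun _ => 0))
        (fun a => ∑ k, Complex.normSq (E k a)) (2^n / n)
        (fun a haa => hbound a (Finset.ne_of_mem_erase haa))
      rwa [hcarde, nsmul_eq_mul] at h1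
    have hdivnn : (0:ℝ) ≤ 2^n / n := by positivity
    have herase2 : (∑ a ∈ (univ : Finset (Fin l → Fin 4)).erase (fun _ => 0),
        ∑ k, Complex.normSq (E k a)) ≤ (4:ℝ)^l * (2^n / n) := by
      refine le_trans herase (mul_le_mul_of_nonneg_right ?_ hdivnn)
      calc ((4^l - 1 : ℕ) : ℝ) ≤ ((4^l : ℕ) : ℝ) := by exact_mod_cast Nat.sub_le _ _
        _ = (4:ℝ)^l := by push_cast; ring
    have hTtot : (∑ a : Fin l → Fin 4, ∑ k, Complex.normSq (E k a))
        ≤ 2^n + (4:ℝ)^l * (2^n / n) := by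
      have := hT
      linarith [hF0, herase2]
    have key : ((2:ℝ)^n)⁻¹ * (((2:ℝ)^l)⁻¹ * ((2:ℝ)^n + (4:ℝ)^l * (2^n/n)))
        = 1/2^l + 2^l/(n:ℝ) := by
      have h4 : (4:ℝ)^l = 2^l * 2^l := by rw [show (4:ℝ) = 2*2 by norm_num, mul_pow]
      rw [h4]
      field_simp
    calc ((2:ℝ)^n)⁻¹ * (((2:ℝ)^l)⁻¹ * ∑ a : Fin l → Fin 4, ∑ k, Complex.normSq (E k a))
        ≤ ((2:ℝ)^n)⁻¹ * (((2:ℝ)^l)⁻¹ * ((2:ℝ)^n + (4:ℝ)^l * (2^n/n))) := by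
          apply mul_le_mul_of_nonneg_left _ (by positivity)
          apply mul_le_mul_of_nonneg_left hTtot (by positivity)
      _ = 1/2^l + 2^l/(n:ℝ) := key
end
end

section
/- Let n be an odd prime, μ_j = sin(2πj/n). Suppose d_1,...,d_n ∈ {−1,0,1} satisfy Σ_j d_j = 0, Σ_j μ_j d_j = 0, and Σ_j μ_j² d_j = 0. Then d_j = 0 for all j. -/
open Finset Real

private lemma aux_cos4 (x : ℝ) : Real.cos (4 * Real.pi - x) = Real.cos x := by
  have h : (4 * Real.pi - x) = (2 * Real.pi - x) + 2 * Real.pi := by ring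
  rw [h, Real.cos_add_two_pi, Real.cos_two_pi_sub]

private lemma aux_sin4 (x : ℝ) : Real.sin (4 * Real.pi - x) = -Real.sin x := by
  have h : (4 * Real.pi - x) = (2 * Real.pi - x) + 2 * Real.pi := by ring
  rw [h, Real.sin_add_two_pi, Real.sin_two_pi_sub]

private lemma key_lin_indep {n : ℕ} (hp : n.Prime) {ζ : ℂ} (hζ : IsPrimitiveRoot ζ n)
    (c : ℕ → ℤ) (h : ∑ k ∈ Finset.range n, (c k : ℂ) * ζ ^ k = 0) :
    ∀ k < n, c k = c 0 := by
  have hn1 : 1 < n := hp.one_lt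
  set P : Polynomial ℚ := ∑ k ∈ Finset.range n,
      Polynomial.C ((c k : ℚ) - (c 0 : ℚ)) * Polynomial.X ^ k with hP
  have hcoeff : ∀ k < n, P.coeff k = (c k : ℚ) - (c 0 : ℚ) := by
    intro k hk
    rw [hP, Polynomial.finset_sum_coeff]
    rw [Finset.sum_eq_single k]
    · rw [Polynomial.coeff_C_mul, Polynomial.coeff_X_pow, if_pos rfl, mul_one]
    · intro b _ hb
      rw [Polynomial.coeff_C_mul, Polynomial.coeff_X_pow, if_neg (fun h => hb h.symm), mul_zero]
    · intro hk'; exact absurd (Finset.mem_range.2 hk) hk'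
  have haev : Polynomial.aeval ζ P = 0 := by
    rw [hP]
    simp only [map_sum, map_mul, map_pow, Polynomial.aeval_C, Polynomial.aeval_X, map_sub,
      map_intCast]
    have : ∑ k ∈ Finset.range n, (((c k : ℂ)) - ((c 0 : ℂ))) * ζ ^ k
        = ∑ k ∈ Finset.range n, ((c k : ℂ) * ζ ^ k) - (c 0 : ℂ) * ∑ k ∈ Finset.range n, ζ ^ k := by
      rw [Finset.mul_sum, ← Finset.sum_sub_distrib]
      congr 1; ext k; ring
    rw [this, h, hζ.geom_sum_eq_zero hn1]
    ring
  have hdvd : Polynomial.cyclotomic n ℚ ∣ P := by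
    rw [Polynomial.cyclotomic_eq_minpoly_rat hζ hp.pos]
    exact minpoly.dvd ℚ ζ haev
  obtain ⟨Q, hQ⟩ := hdvd
  have hPdeg : P.natDegree ≤ n - 1 := by
    apply Polynomial.natDegree_sum_le_of_forall_le
    intro k hk
    have hkn := Finset.mem_range.1 hk
    apply le_trans (Polynomial.natDegree_C_mul_le _ _)
    simp only [Polynomial.natDegree_X_pow]
    omega
  have hcycdeg : (Polynomial.cyclotomic n ℚ).natDegree = n - 1 := by
    rw [Polynomial.natDegree_cyclotomic, Nat.totient_prime hp]
  have hQ0 : Q = 0 := by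
    by_contra hQne
    have hcycne : Polynomial.cyclotomic n ℚ ≠ 0 := Polynomial.cyclotomic_ne_zero n ℚ
    have hdeg : P.natDegree = (n - 1) + Q.natDegree := by
      rw [hQ, Polynomial.natDegree_mul hcycne hQne, hcycdeg]
    have hQdeg : Q.natDegree = 0 := by omega
    have hQc : Q = Polynomial.C (Q.coeff 0) := Polynomial.eq_C_of_natDegree_eq_zero hQdeg
    have hc0 : P.coeff 0 = 0 := by rw [hcoeff 0 (by omega)]; ring
    rw [hQ, Polynomial.mul_coeff_zero, Polynomial.cyclotomic_coeff_zero ℚ hn1, one_mul] at hc0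
    rw [hQc, hc0, map_zero] at hQne
    exact hQne rfl
  have hP0 : P = 0 := by rw [hQ, hQ0, mul_zero]
  intro k hk
  have hck := hcoeff k hk
  rw [hP0, Polynomial.coeff_zero] at hck
  have : (c k : ℚ) = (c 0 : ℚ) := by linarith
  exact_mod_cast this

/-- Key non-degeneracy step: for an odd prime `n` and `μ_j = sin(2πj/n)`, if
`d_j ∈ {-1,0,1}` satisfy `Σ d_j = 0`, `Σ μ_j d_j = 0` and `Σ μ_j² d_j = 0`,
then all `d_j = 0`. -/
theorem eigenvalue_difference_coefficients_vanish (n : ℕ) (hp : n.Prime) (hodd : Odd n)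
    (d : ℕ → ℤ) (hd : ∀ j ∈ Finset.Icc 1 n, d j = -1 ∨ d j = 0 ∨ d j = 1)
    (h0 : ∑ j ∈ Finset.Icc 1 n, d j = 0)
    (h1 : ∑ j ∈ Finset.Icc 1 n, (d j : ℝ) * Real.sin (2 * Real.pi * j / n) = 0)
    (h2 : ∑ j ∈ Finset.Icc 1 n, (d j : ℝ) * Real.sin (2 * Real.pi * j / n) ^ 2 = 0) :
    ∀ j ∈ Finset.Icc 1 n, d j = 0 := by
  have hn1 : 1 < n := hp.one_lt
  have hnR : (n : ℝ) ≠ 0 := Nat.cast_ne_zero.2 (by omega)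
  set ζ : ℂ := Complex.exp (2 * Real.pi * Complex.I / n) with hζdef
  have hζ : IsPrimitiveRoot ζ n := Complex.isPrimitiveRoot_exp n (by omega)
  set f : ℕ → ℤ := fun k => if k = 0 then d n else d k with hf
  -- the basic formula for powers of ζ
  have hz : ∀ j : ℕ, ζ ^ j
      = (Real.cos (2 * Real.pi * j / n) : ℂ) + (Real.sin (2 * Real.pi * j / n) : ℂ) * Complex.I := by
    intro j
    have h1 : ζ ^ j = Complex.exp (((2 * Real.pi * j / n : ℝ) : ℂ) * Complex.I) := by
      rw [hζdef, ← Complex.exp_nat_mul]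
      congr 1
      push_cast
      ring
    rw [h1, Complex.exp_mul_I, Complex.ofReal_cos, Complex.ofReal_sin]
  -- involution σ
  have hσlt : ∀ k, (n - k) % n < n := fun k => Nat.mod_lt _ (by omega)
  have hσσ : ∀ k < n, (n - (n - k) % n) % n = k := by
    intro k hk
    rcases Nat.eq_zero_or_pos k with h | h
    · subst h; simp [Nat.mod_self]
    · have e1 : (n - k) % n = n - k := Nat.mod_eq_of_lt (by omega)
      rw [e1, show n - (n - k) = k by omega, Nat.mod_eq_of_lt hk]
  -- comparing sums over range n (with f) and Icc 1 n (with d)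
  have hconv : ∀ g : ℕ → ℂ, ∑ k ∈ Finset.range n, (f k : ℂ) * g k
      = ∑ j ∈ Finset.Icc 1 n, (d j : ℂ) * g j + ((d n : ℂ) * g 0 - (d n : ℂ) * g n) := by
    intro g
    rw [Finset.range_eq_Ico, Finset.sum_eq_sum_Ico_succ_bot (by omega : 0 < n)]
    rw [show Finset.Icc 1 n = Finset.Ico 1 (n + 1) by rw [Finset.Ico_add_one_right_eq_Icc],
      Finset.sum_Ico_succ_top (by omega : 1 ≤ n)]
    have e1 : ∀ k ∈ Finset.Ico 1 n, (f k : ℂ) * g k = (d k : ℂ) * g k := by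
      intro k hk
      have := (Finset.mem_Ico.1 hk).1
      rw [hf]; simp only; rw [if_neg (by omega)]
    rw [Finset.sum_congr rfl e1]
    rw [hf]
    simp only [if_true, eq_self_iff_true]
    ring
  -- Step A : symmetry d k = d (n-k)
  have hA : ∑ k ∈ Finset.range n, ((f k - f ((n - k) % n) : ℤ) : ℂ) * ζ ^ k = 0 := by
    have hsplit : ∑ k ∈ Finset.range n, ((f k - f ((n - k) % n) : ℤ) : ℂ) * ζ ^ k
        = ∑ k ∈ Finset.range n, (f k : ℂ) * ζ ^ k
          - ∑ k ∈ Finset.range n, (f ((n - k) % n) : ℂ) * ζ ^ k := by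
      rw [← Finset.sum_sub_distrib]
      congr 1; ext k; push_cast; ring
    have hre : ∑ k ∈ Finset.range n, (f ((n - k) % n) : ℂ) * ζ ^ k
        = ∑ k ∈ Finset.range n, (f k : ℂ) * ζ ^ ((n - k) % n) := by
      apply Finset.sum_nbij' (fun k => (n - k) % n) (fun k => (n - k) % n)
      · intro a _; exact Finset.mem_range.2 (hσlt a)
      · intro a _; exact Finset.mem_range.2 (hσlt a)
      · intro a ha; exact hσσ a (Finset.mem_range.1 ha)
      · intro a ha; exact hσσ a (Finset.mem_range.1 ha)
      · intro a ha
        rw [hσσ a (Finset.mem_range.1 ha)]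
    rw [hsplit, hre, ← Finset.sum_sub_distrib]
    have hterm : ∀ k ∈ Finset.range n,
        (f k : ℂ) * ζ ^ k - (f k : ℂ) * ζ ^ ((n - k) % n)
        = (2 * Complex.I) * ((f k : ℂ) * (Real.sin (2 * Real.pi * k / n) : ℂ)) := by
      intro k hk
      have hkn := Finset.mem_range.1 hk
      rcases Nat.eq_zero_or_pos k with h | h
      · subst h; simp [Nat.mod_self]
      · have e1 : (n - k) % n = n - k := Nat.mod_eq_of_lt (by omega)
        rw [e1, hz k, hz (n - k)]
        have e2 : 2 * Real.pi * (↑(n - k) : ℝ) / n = 2 * Real.pi - 2 * Real.pi * k / n := by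
          rw [Nat.cast_sub (by omega : k ≤ n)]
          field_simp
        rw [e2, Real.cos_two_pi_sub, Real.sin_two_pi_sub]
        push_cast
        ring
    rw [Finset.sum_congr rfl hterm, ← Finset.mul_sum]
    have hzero : ∑ k ∈ Finset.range n, (f k : ℂ) * (Real.sin (2 * Real.pi * k / n) : ℂ) = 0 := by
      rw [hconv]
      have e0 : Real.sin (2 * Real.pi * (0 : ℕ) / n) = 0 := by simp
      have en : Real.sin (2 * Real.pi * (n : ℕ) / n) = 0 := by
        rw [mul_div_assoc, div_self hnR, mul_one, Real.sin_two_pi]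
      have hicc : ∑ j ∈ Finset.Icc 1 n, (d j : ℂ) * (Real.sin (2 * Real.pi * j / n) : ℂ) = 0 := by
        have := h1
        calc ∑ j ∈ Finset.Icc 1 n, (d j : ℂ) * (Real.sin (2 * Real.pi * j / n) : ℂ)
            = ((∑ j ∈ Finset.Icc 1 n, (d j : ℝ) * Real.sin (2 * Real.pi * j / n) : ℝ) : ℂ) := by
              push_cast; rfl
          _ = 0 := by rw [h1]; simp
      rw [hicc, e0, en]
      simp
    rw [hzero, mul_zero]
  have hsymm : ∀ k < n, f k = f ((n - k) % n) := by
    have := key_lin_indep hp hζ (fun k => f k - f ((n - k) % n)) hA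
    intro k hk
    have h2 := this k hk
    simp only [Nat.sub_zero, Nat.mod_self] at h2
    omega
  -- Step B : all values equal
  obtain ⟨t, ht⟩ := hodd
  set m : ℕ := t + 1 with hm
  have h2m : 2 * m = n + 1 := by omega
  have hzmod : ∀ a : ℕ, ζ ^ (a % n) = ζ ^ a := by
    intro a
    conv_lhs => rw [hζ.eq_orderOf]
    exact pow_mod_orderOf ζ a
  have hinv2 : ∀ k < n, (2 * (m * k % n)) % n = k := by
    intro k hk
    have e1 : (2 * (m * k % n)) % n = (2 * (m * k)) % n :=
      Nat.ModEq.mul_left 2 (Nat.mod_modEq (m * k) n)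
    rw [e1, show 2 * (m * k) = n * k + k by rw [← mul_assoc, h2m]; ring,
      Nat.mul_add_mod, Nat.mod_eq_of_lt hk]
  have hinv1 : ∀ j < n, (m * (2 * j % n)) % n = j := by
    intro j hj
    have e1 : (m * (2 * j % n)) % n = (m * (2 * j)) % n :=
      Nat.ModEq.mul_left m (Nat.mod_modEq (2 * j) n)
    rw [e1, show m * (2 * j) = n * j + j by rw [← mul_assoc, mul_comm m 2, h2m]; ring,
      Nat.mul_add_mod, Nat.mod_eq_of_lt hj]
  have h2lt : ∀ k : ℕ, 2 * k % n < n := fun k => Nat.mod_lt _ (by omega)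
  have hmlt : ∀ k : ℕ, m * k % n < n := fun k => Nat.mod_lt _ (by omega)
  -- the doubled sum
  have hS2 : ∑ b ∈ Finset.range n, (f b : ℂ) * ζ ^ (2 * b)
      = ∑ b ∈ Finset.range n, (f b : ℂ) * ζ ^ (2 * ((n - b) % n)) := by
    have e1 : ∑ b ∈ Finset.range n, (f b : ℂ) * ζ ^ (2 * b)
        = ∑ b ∈ Finset.range n, (f ((n - b) % n) : ℂ) * ζ ^ (2 * b) := by
      apply Finset.sum_congr rfl
      intro b hb
      rw [← hsymm b (Finset.mem_range.1 hb)]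
    rw [e1]
    apply Finset.sum_nbij' (fun k => (n - k) % n) (fun k => (n - k) % n)
    · intro a _; exact Finset.mem_range.2 (hσlt a)
    · intro a _; exact Finset.mem_range.2 (hσlt a)
    · intro a ha; exact hσσ a (Finset.mem_range.1 ha)
    · intro a ha; exact hσσ a (Finset.mem_range.1 ha)
    · intro a ha
      rw [hσσ a (Finset.mem_range.1 ha)]
  have hterm2 : ∀ b ∈ Finset.range n,
      (f b : ℂ) * ζ ^ (2 * b) + (f b : ℂ) * ζ ^ (2 * ((n - b) % n))
      = 2 * ((f b : ℂ) * (Real.cos (2 * (2 * Real.pi * b / n)) : ℝ)) := by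
    intro b hb
    have hbn := Finset.mem_range.1 hb
    rcases Nat.eq_zero_or_pos b with h | h
    · subst h
      simp [Nat.mod_self]
      ring
    · have e1 : (n - b) % n = n - b := Nat.mod_eq_of_lt (by omega)
      rw [e1, hz (2 * b), hz (2 * (n - b))]
      have e2 : 2 * Real.pi * (↑(2 * b) : ℝ) / n = 2 * (2 * Real.pi * b / n) := by
        push_cast; ring
      have e3 : 2 * Real.pi * (↑(2 * (n - b)) : ℝ) / n
          = 4 * Real.pi - 2 * (2 * Real.pi * b / n) := by
        rw [Nat.cast_mul, Nat.cast_sub (by omega : b ≤ n)]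
        push_cast
        field_simp
        ring
      rw [e2, e3, aux_cos4, aux_sin4]
      push_cast
      ring
  have hcosIcc : ∑ j ∈ Finset.Icc 1 n, (d j : ℝ) * Real.cos (2 * (2 * Real.pi * j / n)) = 0 := by
    have hs : ∀ x : ℝ, Real.sin x ^ 2 = 1 / 2 - Real.cos (2 * x) / 2 := by
      intro x
      have a1 := Real.sin_sq_add_cos_sq x
      have a2 := Real.cos_two_mul x
      nlinarith
    have h0R : ∑ j ∈ Finset.Icc 1 n, (d j : ℝ) = 0 := by exact_mod_cast h0
    have e1 : ∑ j ∈ Finset.Icc 1 n, (d j : ℝ) * Real.cos (2 * (2 * Real.pi * j / n))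
        = ∑ j ∈ Finset.Icc 1 n,
            ((d j : ℝ) - 2 * ((d j : ℝ) * Real.sin (2 * Real.pi * j / n) ^ 2)) := by
      apply Finset.sum_congr rfl
      intro j _
      rw [hs]
      ring
    rw [e1, Finset.sum_sub_distrib, ← Finset.mul_sum, h0R, h2]
    ring
  have hSzero : ∑ b ∈ Finset.range n, (f b : ℂ) * ζ ^ (2 * b) = 0 := by
    have e1 : (2 : ℂ) * ∑ b ∈ Finset.range n, (f b : ℂ) * ζ ^ (2 * b)
        = ∑ b ∈ Finset.range n, ((f b : ℂ) * ζ ^ (2 * b) + (f b : ℂ) * ζ ^ (2 * ((n - b) % n))) := by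
      rw [Finset.sum_add_distrib, ← hS2]
      ring
    rw [Finset.sum_congr rfl hterm2, ← Finset.mul_sum] at e1
    have e2 : ∑ b ∈ Finset.range n, (f b : ℂ) * ((Real.cos (2 * (2 * Real.pi * b / n)) : ℝ) : ℂ)
        = 0 := by
      rw [hconv]
      have g0 : ((Real.cos (2 * (2 * Real.pi * (0 : ℕ) / n)) : ℝ) : ℂ) = 1 := by
        norm_num
      have gn : ((Real.cos (2 * (2 * Real.pi * (n : ℕ) / n)) : ℝ) : ℂ) = 1 := by
        rw [show (2 : ℝ) * (2 * Real.pi * (n : ℕ) / n) = 2 * Real.pi + 2 * Real.pi by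
          field_simp; ring]
        rw [Real.cos_add_two_pi, Real.cos_two_pi]
        norm_num
      have hicc : ∑ j ∈ Finset.Icc 1 n,
          (d j : ℂ) * ((Real.cos (2 * (2 * Real.pi * j / n)) : ℝ) : ℂ) = 0 := by
        calc ∑ j ∈ Finset.Icc 1 n, (d j : ℂ) * ((Real.cos (2 * (2 * Real.pi * j / n)) : ℝ) : ℂ)
            = ((∑ j ∈ Finset.Icc 1 n, (d j : ℝ) * Real.cos (2 * (2 * Real.pi * j / n)) : ℝ) : ℂ) := by
              push_cast; rfl
          _ = 0 := by rw [hcosIcc]; simp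
      rw [hicc, g0, gn]
      ring
    rw [e2, mul_zero] at e1
    have h2ne : (2 : ℂ) ≠ 0 := two_ne_zero
    exact (mul_eq_zero.1 e1).resolve_left h2ne
  have hB : ∑ k ∈ Finset.range n, ((f (m * k % n) : ℤ) : ℂ) * ζ ^ k = 0 := by
    have e1 : ∑ k ∈ Finset.range n, ((f (m * k % n) : ℤ) : ℂ) * ζ ^ k
        = ∑ b ∈ Finset.range n, (f b : ℂ) * ζ ^ (2 * b % n) := by
      apply Finset.sum_nbij' (fun k => m * k % n) (fun b => 2 * b % n)
      · intro a _; exact Finset.mem_range.2 (hmlt a)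
      · intro a _; exact Finset.mem_range.2 (h2lt a)
      · intro a ha; exact hinv2 a (Finset.mem_range.1 ha)
      · intro a ha; exact hinv1 a (Finset.mem_range.1 ha)
      · intro a ha
        rw [hinv2 a (Finset.mem_range.1 ha)]
    rw [e1]
    calc ∑ b ∈ Finset.range n, (f b : ℂ) * ζ ^ (2 * b % n)
        = ∑ b ∈ Finset.range n, (f b : ℂ) * ζ ^ (2 * b) := by
          apply Finset.sum_congr rfl
          intro b _
          rw [hzmod]
      _ = 0 := hSzero
  -- conclude : f is constant
  have hconst : ∀ j < n, f j = f 0 := by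
    have hkey := key_lin_indep hp hζ (fun k => f (m * k % n)) hB
    intro j hj
    have e1 := hkey (2 * j % n) (h2lt j)
    rw [hinv1 j hj] at e1
    rw [e1, mul_zero, Nat.zero_mod]
  -- all d j (j ∈ Icc 1 n) equal d n
  have hdn : ∀ j ∈ Finset.Icc 1 n, d j = d n := by
    intro j hj
    have hj' := Finset.mem_Icc.1 hj
    rcases eq_or_lt_of_le hj'.2 with h | h
    · rw [h]
    · have e1 := hconst j h
      rw [hf] at e1
      simpa [if_neg (by omega : ¬ j = 0)] using e1
  have hsum : ∑ j ∈ Finset.Icc 1 n, d j = n * d n := by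
    rw [Finset.sum_congr rfl hdn, Finset.sum_const, Nat.card_Icc]
    simp [Nat.add_sub_cancel]
  rw [hsum] at h0
  have hdn0 : d n = 0 := by
    have : (n : ℤ) ≠ 0 := by exact_mod_cast (by omega : n ≠ 0)
    exact (mul_eq_zero.1 h0).resolve_left this
  intro j hj
  rw [hdn j hj, hdn0]
end

section
/- Let H = Σ_{j=1}^n Σ_{a,b=1}^3 α_{a,b,j} σ_j^(a) σ_{j+1}^(b) (real coefficients, cyclic indices, no single-site terms) be a Hermitian operator on (C²)^⊗n with non-degenerate spectrum, and let |ψ⟩ be any eigenvector. Then ⟨ψ|σ_1^(a)|ψ⟩ = 0 for a = 1,2,3, and hence the reduced density matrix of |ψ⟩ on qubit 1 equals I/2, so its purity is exactly 1/2. -/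
open Matrix Finset
noncomputable section

/-- target bit -/
def tgt : Fin 4 → Fin 2 → Fin 2 := ![id, ![1,0], ![1,0], id]
/-- coefficient -/
def cf : Fin 4 → Fin 2 → ℂ := ![fun _ => 1, fun _ => 1, ![-Complex.I, Complex.I], ![1, -1]]

lemma pauli_apply (a : Fin 4) (x y : Fin 2) :
    pauli a x y = if y = tgt a x then cf a x else 0 := by
  fin_cases a <;> fin_cases x <;> fin_cases y <;>
    simp [pauli, tgt, cf, Matrix.one_apply]

lemma pauli_herm (a : Fin 4) (x y : Fin 2) :
    (starRingEnd ℂ) (pauli a y x) = pauli a x y := by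
  fin_cases a <;> fin_cases x <;> fin_cases y <;>
    simp [pauli, Matrix.one_apply]

lemma pauliAt_apply (n : ℕ) (j : Fin n) (a : Fin 4) (x y : Fin n → Fin 2) :
    pauliAt n j a x y =
      if y = Function.update x j (tgt a (x j)) then cf a (x j) else 0 := by
  unfold pauliAt
  by_cases h : y = Function.update x j (tgt a (x j))
  · rw [if_pos h]
    rw [Finset.prod_eq_single j]
    · rw [if_pos rfl, h, Function.update_self, pauli_apply, if_pos rfl]
    · intro i _ hij
      rw [if_neg hij, if_pos]
      rw [h, Function.update_of_ne hij]
    · simp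
  · rw [if_neg h]
    have : ∃ i, y i ≠ Function.update x j (tgt a (x j)) i := by
      by_contra hh
      push_neg at hh
      exact h (funext hh)
    obtain ⟨i, hi⟩ := this
    apply Finset.prod_eq_zero (Finset.mem_univ i)
    by_cases hij : i = j
    · subst hij
      rw [if_pos rfl, pauli_apply, if_neg]
      rwa [Function.update_self] at hi
    · rw [if_neg hij, if_neg]
      rw [Function.update_of_ne hij] at hi
      exact fun hh => hi hh.symm

lemma pauliAt_mulVec (n : ℕ) (j : Fin n) (a : Fin 4) (v : (Fin n → Fin 2) → ℂ)
    (x : Fin n → Fin 2) :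
    (pauliAt n j a *ᵥ v) x = cf a (x j) * v (Function.update x j (tgt a (x j))) := by
  unfold Matrix.mulVec dotProduct
  simp only [pauliAt_apply, ite_mul, zero_mul]
  rw [Finset.sum_ite_eq' Finset.univ (Function.update x j (tgt a (x j)))]
  simp

/-- bit flip of a configuration -/
def flipv {n : ℕ} (x : Fin n → Fin 2) : Fin n → Fin 2 := fun i => tgt 2 (x i)
/-- product of σ_y coefficients -/
def sgn {n : ℕ} (x : Fin n → Fin 2) : ℂ := ∏ i, cf 2 (x i)
/-- antiunitary operator `K = (σ_y)^{⊗n} ∘ conj` -/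
def Kop {n : ℕ} (v : (Fin n → Fin 2) → ℂ) : (Fin n → Fin 2) → ℂ :=
  fun x => sgn x * (starRingEnd ℂ) (v (flipv x))

lemma flipv_update {n : ℕ} (x : Fin n → Fin 2) (j : Fin n) (t : Fin 2) :
    flipv (Function.update x j t) = Function.update (flipv x) j (tgt 2 t) := by
  funext i
  by_cases h : i = j
  · subst h; simp [flipv]
  · simp [flipv, Function.update_of_ne h]

lemma sgn_update {n : ℕ} (x : Fin n → Fin 2) (j : Fin n) (t : Fin 2) :
    sgn (Function.update x j t) = cf 2 t * ∏ i ∈ Finset.univ.erase j, cf 2 (x i) := by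
  unfold sgn
  rw [← Finset.mul_prod_erase _ _ (Finset.mem_univ j), Function.update_self]
  congr 1
  apply Finset.prod_congr rfl
  intro i hi
  rw [Function.update_of_ne (Finset.ne_of_mem_erase hi)]

lemma sgn_eq {n : ℕ} (x : Fin n → Fin 2) (j : Fin n) :
    sgn x = cf 2 (x j) * ∏ i ∈ Finset.univ.erase j, cf 2 (x i) :=
  (Finset.mul_prod_erase _ _ (Finset.mem_univ j)).symm

lemma tgt_comm (a : Fin 4) (k : Fin 2) : tgt 2 (tgt a k) = tgt a (tgt 2 k) := by
  fin_cases a <;> fin_cases k <;> rfl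

lemma cf_scal (a : Fin 3) (k : Fin 2) :
    cf a.succ k * cf 2 (tgt a.succ k) =
      -(cf 2 k * (starRingEnd ℂ) (cf a.succ (tgt 2 k))) := by
  fin_cases a <;> fin_cases k <;>
    simp [cf, tgt, Complex.ext_iff]

lemma anticomm {n : ℕ} (j : Fin n) (a : Fin 3) (v : (Fin n → Fin 2) → ℂ) :
    pauliAt n j a.succ *ᵥ Kop v = -(Kop (pauliAt n j a.succ *ᵥ v)) := by
  funext x
  rw [Pi.neg_apply, pauliAt_mulVec]
  unfold Kop
  rw [pauliAt_mulVec, flipv_update, tgt_comm]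
  have hfj : flipv x j = tgt 2 (x j) := rfl
  rw [_root_.map_mul, ← hfj]
  rw [sgn_update, sgn_eq x j]
  rw [hfj]
  linear_combination ((∏ i ∈ Finset.univ.erase j, cf 2 (x i)) *
    (starRingEnd ℂ) (v (Function.update (flipv x) j (tgt a.succ (tgt 2 (x j)))))) *
      cf_scal a (x j)

lemma sum_mulVec {ι α : Type*} [Fintype α] [DecidableEq α] (s : Finset ι)
    (M : ι → Matrix α α ℂ) (v : α → ℂ) :
    (∑ i ∈ s, M i) *ᵥ v = ∑ i ∈ s, (M i *ᵥ v) := by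
  classical
  induction s using Finset.induction with
  | empty => simp [Matrix.mulVec, dotProduct]
  | insert _ _ h ih => simp [Finset.sum_insert h, Matrix.add_mulVec, ih]

lemma Kop_sum {n : ℕ} {ι : Type*} (s : Finset ι) (f : ι → (Fin n → Fin 2) → ℂ) :
    Kop (∑ i ∈ s, f i) = ∑ i ∈ s, Kop (f i) := by
  funext x
  simp [Kop, Finset.sum_apply, Finset.mul_sum]

lemma Kop_real_smul {n : ℕ} (r : ℝ) (v : (Fin n → Fin 2) → ℂ) :
    Kop ((r : ℂ) • v) = (r : ℂ) • Kop v := by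
  funext x
  simp [Kop]
  ring

lemma Kop_smul_matrix {n : ℕ} (r : ℝ) (M : Matrix (Fin n → Fin 2) (Fin n → Fin 2) ℂ)
    (v : (Fin n → Fin 2) → ℂ) : ((r : ℂ) • M) *ᵥ v = (r : ℂ) • (M *ᵥ v) :=
  Matrix.smul_mulVec _ _ _

lemma sgn_conj_mul {n : ℕ} (x : Fin n → Fin 2) :
    (starRingEnd ℂ) (sgn x) * sgn x = 1 := by
  unfold sgn
  rw [map_prod, ← Finset.prod_mul_distrib]
  apply Finset.prod_eq_one
  intro i _
  have : ∀ k : Fin 2, (starRingEnd ℂ) (cf 2 k) * cf 2 k = 1 := by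
    intro k; fin_cases k <;> simp [cf]
  exact this (x i)

lemma flipv_invol {n : ℕ} (x : Fin n → Fin 2) : flipv (flipv x) = x := by
  funext i
  have : ∀ k : Fin 2, tgt 2 (tgt 2 k) = k := by decide
  exact this (x i)

lemma Kdot {n : ℕ} (v w : (Fin n → Fin 2) → ℂ) :
    star (Kop v) ⬝ᵥ Kop w = (starRingEnd ℂ) (star v ⬝ᵥ w) := by
  unfold dotProduct
  rw [map_sum]
  rw [← Equiv.sum_comp (Function.Involutive.toPerm _ flipv_invol)
    (fun x => star (Kop v) x * Kop w x)]
  apply Finset.sum_congr rfl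
  intro x _
  simp only [Function.Involutive.coe_toPerm, Pi.star_apply, Kop]
  rw [show ∀ y : Fin n → Fin 2, (Function.Involutive.toPerm _ flipv_invol) y = flipv y from
    fun _ => rfl, flipv_invol]
  simp only [RCLike.star_def, _root_.map_mul, Complex.conj_conj]
  linear_combination (v x * (starRingEnd ℂ) (w x)) * sgn_conj_mul (flipv x)

lemma pauliAt_conj (n : ℕ) (j : Fin n) (a : Fin 4) (x y : Fin n → Fin 2) :
    (starRingEnd ℂ) (pauliAt n j a x y) = pauliAt n j a y x := by
  unfold pauliAt
  rw [map_prod]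
  apply Finset.prod_congr rfl
  intro i _
  by_cases h : i = j
  · rw [if_pos h, if_pos h, pauli_herm]
  · rw [if_neg h, if_neg h]
    by_cases hxy : x i = y i
    · rw [if_pos hxy, if_pos hxy.symm, _root_.map_one]
    · rw [if_neg hxy, if_neg (fun hh => hxy hh.symm), map_zero]

lemma expect_conj {n : ℕ} (j : Fin n) (a : Fin 4) (ψ : (Fin n → Fin 2) → ℂ) :
    (starRingEnd ℂ) (star ψ ⬝ᵥ (pauliAt n j a *ᵥ ψ)) = star ψ ⬝ᵥ (pauliAt n j a *ᵥ ψ) := by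
  simp only [dotProduct, Matrix.mulVec, Pi.star_apply, RCLike.star_def, map_sum,
    _root_.map_mul, Complex.conj_conj, pauliAt_conj, Finset.mul_sum, Finset.sum_mul]
  rw [Finset.sum_comm]
  apply Finset.sum_congr rfl
  intro y _
  apply Finset.sum_congr rfl
  intro x _
  ring

lemma Hcomm {n : ℕ} (α : Fin n → Fin 3 → Fin 3 → ℝ) (v : (Fin n → Fin 2) → ℂ) :
    (∑ j, ∑ a : Fin 3, ∑ b : Fin 3,
        (α j a b : ℂ) • (pauliAt n j a.succ * pauliAt n (cycSucc j) b.succ)) *ᵥ Kop v =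
      Kop ((∑ j, ∑ a : Fin 3, ∑ b : Fin 3,
        (α j a b : ℂ) • (pauliAt n j a.succ * pauliAt n (cycSucc j) b.succ)) *ᵥ v) := by
  have term : ∀ (j : Fin n) (a b : Fin 3),
      (pauliAt n j a.succ * pauliAt n (cycSucc j) b.succ) *ᵥ Kop v =
        Kop ((pauliAt n j a.succ * pauliAt n (cycSucc j) b.succ) *ᵥ v) := by
    intro j a b
    rw [← Matrix.mulVec_mulVec, ← Matrix.mulVec_mulVec]
    rw [anticomm (cycSucc j) b v, Matrix.mulVec_neg, anticomm j a, neg_neg]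
  simp only [_root_.sum_mulVec, Matrix.smul_mulVec, Kop_sum, Kop_real_smul]
  apply Finset.sum_congr rfl
  intro j _
  apply Finset.sum_congr rfl
  intro a _
  apply Finset.sum_congr rfl
  intro b _
  rw [term]

def splitEquiv (n : ℕ) (hn : 0 < n) :
    ((Fin 1 → Fin 2) × (Fin (n - 1) → Fin 2)) ≃ (Fin n → Fin 2) where
  toFun p := glue n 1 p.1 p.2
  invFun x := (fun _ => x ⟨0, hn⟩, fun i => x ⟨i.1 + 1, by have := i.isLt; omega⟩)
  left_inv p := by
    refine Prod.ext ?_ ?_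
    · funext i
      show glue n 1 p.1 p.2 ⟨0, hn⟩ = p.1 i
      rw [show glue n 1 p.1 p.2 ⟨0, hn⟩ = p.1 ⟨0, Nat.one_pos⟩ from dif_pos Nat.one_pos]
      exact congrArg p.1 (Subsingleton.elim _ _)
    · funext i
      show glue n 1 p.1 p.2 ⟨i.1 + 1, _⟩ = p.2 i
      rw [show glue n 1 p.1 p.2 ⟨i.1 + 1, by have := i.isLt; omega⟩ =
        p.2 ⟨i.1 + 1 - 1, by have := i.isLt; omega⟩ from dif_neg (show ¬((i.1 + 1 : ℕ) < 1) by omega)]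
      exact congrArg p.2 (Fin.ext (by simp))
  right_inv x := by
    funext i
    simp only [glue]
    split
    · rename_i h
      exact congrArg x (Fin.ext (show (0:ℕ) = i.1 by omega))
    · rename_i h
      exact congrArg x (Fin.ext (show (i.1 - 1 + 1 : ℕ) = i.1 by omega))

lemma sum_split {n : ℕ} (hn : 0 < n) (F : (Fin n → Fin 2) → ℂ) :
    ∑ x, F x = ∑ w : Fin (n - 1) → Fin 2,
      (F (glue n 1 (fun _ => 0) w) + F (glue n 1 (fun _ => 1) w)) := by
  rw [← Equiv.sum_comp (splitEquiv n hn) F]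
  rw [Fintype.sum_prod_type_right]
  apply Finset.sum_congr rfl
  intro w _
  rw [show (Finset.univ : Finset (Fin 1 → Fin 2)) = {fun _ => 0, fun _ => 1} by
    apply Finset.eq_of_subset_of_card_le
    · intro u _
      simp only [Finset.mem_insert, Finset.mem_singleton]
      rcases (by omega : u 0 = 0 ∨ u 0 = 1) with h | h
      · left; funext i; rw [Subsingleton.elim i 0, h]
      · right; funext i; rw [Subsingleton.elim i 0, h]
    · rw [Finset.card_univ, Finset.card_insert_of_notMem (by
          simp only [Finset.mem_singleton]
          intro h
          exact absurd (congrFun h 0) (by decide)), Finset.card_singleton]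
      simp]
  rw [Finset.sum_insert (by
    simp only [Finset.mem_singleton]
    intro h
    exact absurd (congrFun h 0) (by decide)), Finset.sum_singleton]
  rfl

lemma glue_at_zero {n : ℕ} (hn : 0 < n) (u : Fin 1 → Fin 2) (w : Fin (n - 1) → Fin 2) :
    glue n 1 u w ⟨0, hn⟩ = u 0 := by
  rw [show glue n 1 u w ⟨0, hn⟩ = u ⟨0, Nat.one_pos⟩ from dif_pos Nat.one_pos]
  exact congrArg u (Subsingleton.elim _ _)

lemma glue_update {n : ℕ} (hn : 0 < n) (u : Fin 1 → Fin 2) (w : Fin (n - 1) → Fin 2)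
    (t : Fin 2) :
    Function.update (glue n 1 u w) ⟨0, hn⟩ t = glue n 1 (fun _ => t) w := by
  funext i
  by_cases h : i = ⟨0, hn⟩
  · subst h
    rw [Function.update_self]
    exact (show glue n 1 (fun _ => t) w ⟨0, hn⟩ = t from dif_pos Nat.one_pos).symm
  · rw [Function.update_of_ne h]
    have h1 : ¬ (i.1 < 1) := by
      intro hh
      exact h (Fin.ext (show i.1 = 0 by omega))
    rw [show glue n 1 u w i = w ⟨i.1 - 1, by have := i.isLt; omega⟩ from dif_neg h1,
      show glue n 1 (fun _ => t) w i = w ⟨i.1 - 1, by have := i.isLt; omega⟩ from dif_neg h1]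

open Polynomial in
lemma eig_prop {ι : Type*} [Fintype ι] [DecidableEq ι] (M : Matrix ι ι ℂ)
    (hnd : M.charpoly.roots.Nodup) {μ : ℂ} {ψ φ : ι → ℂ}
    (hψe : M *ᵥ ψ = μ • ψ) (hφe : M *ᵥ φ = μ • φ) (hψ0 : ψ ≠ 0) :
    ∃ c : ℂ, φ = c • ψ := by
  by_contra hc
  push_neg at hc
  have hne : φ ≠ ψ := fun h => hc 1 (by rw [h, one_smul])
  have hli : LinearIndepOn ℂ id ({φ, ψ} : Set (ι → ℂ)) := by
    rw [show ({φ, ψ} : Set (ι → ℂ)) = insert φ {ψ} from rfl,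
      linearIndepOn_id_insert (by simpa using hne)]
    refine ⟨LinearIndepOn.singleton (v := id) hψ0, ?_⟩
    intro h
    rw [Submodule.mem_span_singleton] at h
    obtain ⟨c, hcs⟩ := h
    exact hc c hcs.symm
  -- basis extending {φ, ψ}
  classical
  let b := Module.Basis.extend hli
  haveI : Fintype ↥(hli.extend (Set.subset_univ _)) :=
    FiniteDimensional.fintypeBasisIndex b
  set f := Matrix.toLin' M with hf
  set A := LinearMap.toMatrix b b f with hA
  have hch : A.charpoly = M.charpoly := by
    rw [LinearMap.charpoly_toMatrix]
    rw [show M.charpoly = (LinearMap.toMatrix' f).charpoly by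
      rw [hf, LinearMap.toMatrix'_toLin']]
    rw [← LinearMap.toMatrix_eq_toMatrix' (R := ℂ)]
    exact (LinearMap.charpoly_toMatrix f (Pi.basisFun ℂ ι)).symm
  have hφm : φ ∈ hli.extend (Set.subset_univ _) :=
    hli.subset_extend _ (by simp)
  have hψm : ψ ∈ hli.extend (Set.subset_univ _) :=
    hli.subset_extend _ (by simp)
  set j₁ : ↥(hli.extend (Set.subset_univ _)) := ⟨φ, hφm⟩ with hj₁
  set j₂ : ↥(hli.extend (Set.subset_univ _)) := ⟨ψ, hψm⟩ with hj₂
  have hjne : j₁ ≠ j₂ := by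
    intro h
    exact hne (congrArg Subtype.val h)
  -- columns of A
  have hcol : ∀ (j : ↥(hli.extend (Set.subset_univ _))), (b j = φ ∨ b j = ψ) →
      ∀ i, A i j = μ * (if i = j then 1 else 0) := by
    intro j hj i
    have hbj : f (b j) = μ • b j := by
      rcases hj with h | h <;>
        simp [hf, Matrix.toLin'_apply, h, hψe, hφe]
    rw [hA, LinearMap.toMatrix_apply, hbj, _root_.map_smul, Module.Basis.repr_self]
    simp [Finsupp.single_apply, eq_comm]
  set p : Polynomial ℂ := X - C μ with hp
  have key : ∀ (j : ↥(hli.extend (Set.subset_univ _))), (b j = φ ∨ b j = ψ) →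
      ∀ i, charmatrix A i j = p * (if i = j then 1 else 0) := by
    intro j hj i
    rcases eq_or_ne i j with h | h
    · rw [h, charmatrix_apply_eq, hcol j hj j, if_pos rfl, if_pos rfl, mul_one, mul_one, hp]
    · rw [charmatrix_apply_ne _ _ _ h, hcol j hj i, if_neg h, if_neg h, mul_zero, map_zero,
        neg_zero, mul_zero]
  have hb1 : b j₁ = φ := Module.Basis.extend_apply_self hli j₁
  have hb2 : b j₂ = ψ := Module.Basis.extend_apply_self hli j₂
  set u1 : ↥(hli.extend (Set.subset_univ _)) → Polynomial ℂ :=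
    fun i => if i = j₁ then 1 else 0 with hu1
  set u2 : ↥(hli.extend (Set.subset_univ _)) → Polynomial ℂ :=
    fun i => if i = j₂ then 1 else 0 with hu2
  set B1 : Matrix _ _ (Polynomial ℂ) := (charmatrix A).updateCol j₁ u1 with hB1
  have e1 : charmatrix A = (charmatrix A).updateCol j₁ (p • u1) := by
    ext i j
    rcases eq_or_ne j j₁ with h | h
    · subst h
      rw [Matrix.updateCol_apply, if_pos rfl, key j₁ (Or.inl hb1) i]
      simp [hu1]
    · rw [Matrix.updateCol_apply, if_neg h]
  have h1 : A.charpoly = p * B1.det := by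
    rw [Matrix.charpoly, e1, Matrix.det_updateCol_smul, hB1]
  have e2 : B1 = B1.updateCol j₂ (p • u2) := by
    ext i j
    rcases eq_or_ne j j₂ with h | h
    · subst h
      rw [Matrix.updateCol_apply, if_pos rfl, hB1, Matrix.updateCol_apply,
        if_neg hjne.symm, key j₂ (Or.inr hb2) i]
      simp [hu2]
    · rw [Matrix.updateCol_apply, if_neg h]
  have h2 : B1.det = p * ((B1.updateCol j₂ u2).det) := by
    conv_lhs => rw [e2]
    rw [Matrix.det_updateCol_smul]
  have hdvd : p ^ 2 ∣ M.charpoly := by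
    refine ⟨(B1.updateCol j₂ u2).det, ?_⟩
    rw [← hch, h1, h2]; ring
  have hmul : 2 ≤ M.charpoly.rootMultiplicity μ :=
    (Polynomial.le_rootMultiplicity_iff (Matrix.charpoly_monic M).ne_zero).mpr hdvd
  have hcount := Multiset.nodup_iff_count_le_one.mp hnd μ
  rw [Polynomial.count_roots] at hcount
  omega


/-- For a nearest-neighbour Hamiltonian `H = Σ_j Σ_{a,b=1}^3 α_{a,b,j} σ_j^(a) σ_{j+1}^(b)`
(no single-site terms) with non-degenerate spectrum, every normalized eigenvector `ψ`
satisfies `⟨ψ|σ_1^(a)|ψ⟩ = 0` for `a = 1,2,3`, its reduced density matrix on qubit 1 is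
`I/2`, and its purity is exactly `1/2`. -/
theorem eigenstate_purity_one_qubit (n : ℕ) (hn : 0 < n)
    (α : Fin n → Fin 3 → Fin 3 → ℝ)
    (hnd : (((∑ j, ∑ a : Fin 3, ∑ b : Fin 3,
        (α j a b : ℂ) • (pauliAt n j a.succ * pauliAt n (cycSucc j) b.succ)) :
        Matrix (Fin n → Fin 2) (Fin n → Fin 2) ℂ).charpoly.roots).Nodup)
    (ψ : (Fin n → Fin 2) → ℂ) (hψ : star ψ ⬝ᵥ ψ = 1) (μ : ℝ)
    (heig : (∑ j, ∑ a : Fin 3, ∑ b : Fin 3,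
        (α j a b : ℂ) • (pauliAt n j a.succ * pauliAt n (cycSucc j) b.succ)) *ᵥ ψ =
      (μ : ℂ) • ψ) :
    (∀ a : Fin 3, star ψ ⬝ᵥ (pauliAt n ⟨0, hn⟩ a.succ *ᵥ ψ) = 0) ∧
      redDM n 1 ψ = ((2 : ℂ))⁻¹ • 1 ∧
      (Matrix.trace (redDM n 1 ψ * redDM n 1 ψ)).re = 1 / 2 := by
  have hψ0 : ψ ≠ 0 := by
    intro h
    rw [h] at hψ
    simp [dotProduct] at hψ
  have hKeig : (∑ j, ∑ a : Fin 3, ∑ b : Fin 3,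
      (α j a b : ℂ) • (pauliAt n j a.succ * pauliAt n (cycSucc j) b.succ)) *ᵥ Kop ψ =
      (μ : ℂ) • Kop ψ := by
    rw [Hcomm, heig, Kop_real_smul]
  obtain ⟨c, hc⟩ := eig_prop _ hnd heig hKeig hψ0
  have hcc : (starRingEnd ℂ) c * c = 1 := by
    have h1 : star (Kop ψ) ⬝ᵥ Kop ψ = 1 := by rw [Kdot, hψ, _root_.map_one]
    rw [hc, star_smul, smul_dotProduct, dotProduct_smul, hψ] at h1
    simpa [RCLike.star_def] using h1
  have hta : ∀ a : Fin 3, star ψ ⬝ᵥ (pauliAt n ⟨0, hn⟩ a.succ *ᵥ ψ) = 0 := by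
    intro a
    have h1 : star (Kop ψ) ⬝ᵥ (pauliAt n ⟨0, hn⟩ a.succ *ᵥ Kop ψ) =
        star ψ ⬝ᵥ (pauliAt n ⟨0, hn⟩ a.succ *ᵥ ψ) := by
      rw [hc, Matrix.mulVec_smul, star_smul, smul_dotProduct, dotProduct_smul]
      rw [smul_smul, RCLike.star_def, hcc, one_smul]
    have h2 : star (Kop ψ) ⬝ᵥ (pauliAt n ⟨0, hn⟩ a.succ *ᵥ Kop ψ) =
        -((starRingEnd ℂ) (star ψ ⬝ᵥ (pauliAt n ⟨0, hn⟩ a.succ *ᵥ ψ))) := by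
      rw [anticomm, dotProduct_neg, Kdot]
    have h3 := expect_conj ⟨0, hn⟩ a.succ ψ
    have h4 : star ψ ⬝ᵥ (pauliAt n ⟨0, hn⟩ a.succ *ᵥ ψ) =
        -(star ψ ⬝ᵥ (pauliAt n ⟨0, hn⟩ a.succ *ᵥ ψ)) := by
      have h5 := h1.symm.trans h2
      rwa [h3] at h5
    exact add_self_eq_zero.mp (by linear_combination h4)
  set q : (Fin 1 → Fin 2) → (Fin 1 → Fin 2) → ℂ :=
    fun u v => ∑ w, (starRingEnd ℂ) (ψ (glue n 1 u w)) * ψ (glue n 1 v w) with hqdef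
  have texp : ∀ a : Fin 3, star ψ ⬝ᵥ (pauliAt n ⟨0, hn⟩ a.succ *ᵥ ψ) =
      cf a.succ 0 * q (fun _ => 0) (fun _ => tgt a.succ 0) +
        cf a.succ 1 * q (fun _ => 1) (fun _ => tgt a.succ 1) := by
    intro a
    have e1 : star ψ ⬝ᵥ (pauliAt n ⟨0, hn⟩ a.succ *ᵥ ψ)
        = ∑ x, (starRingEnd ℂ) (ψ x) * (cf a.succ (x ⟨0, hn⟩) *
            ψ (Function.update x ⟨0, hn⟩ (tgt a.succ (x ⟨0, hn⟩)))) := by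
      apply Finset.sum_congr rfl
      intro x _
      rw [pauliAt_mulVec]
      rfl
    rw [e1, sum_split hn]
    rw [hqdef]
    simp only [Finset.mul_sum]
    rw [← Finset.sum_add_distrib]
    apply Finset.sum_congr rfl
    intro w _
    rw [glue_at_zero hn, glue_at_zero hn, glue_update hn, glue_update hn]
    show (starRingEnd ℂ) (ψ (glue n 1 (fun _ => 0) w)) * (cf a.succ 0 *
          ψ (glue n 1 (fun _ => tgt a.succ 0) w)) +
        (starRingEnd ℂ) (ψ (glue n 1 (fun _ => 1) w)) * (cf a.succ 1 *
          ψ (glue n 1 (fun _ => tgt a.succ 1) w)) = _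
    ring
  have hsum : q (fun _ => 0) (fun _ => 0) + q (fun _ => 1) (fun _ => 1) = 1 := by
    have e1 : star ψ ⬝ᵥ ψ = ∑ x, (starRingEnd ℂ) (ψ x) * ψ x := rfl
    rw [e1, sum_split hn] at hψ
    rw [hqdef]
    rw [← Finset.sum_add_distrib]
    exact hψ
  have E1 := hta 0
  rw [texp 0] at E1
  have E2 := hta 1
  rw [texp 1] at E2
  have E3 := hta 2
  rw [texp 2] at E3
  have c10 : cf (0 : Fin 3).succ 0 = 1 := rfl
  have c11 : cf (0 : Fin 3).succ 1 = 1 := rfl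
  have c20 : cf (1 : Fin 3).succ 0 = -Complex.I := rfl
  have c21 : cf (1 : Fin 3).succ 1 = Complex.I := rfl
  have c30 : cf (2 : Fin 3).succ 0 = 1 := rfl
  have c31 : cf (2 : Fin 3).succ 1 = -1 := rfl
  have t10 : (fun _ : Fin 1 => tgt (0 : Fin 3).succ 0) = (fun _ => (1 : Fin 2)) := rfl
  have t11 : (fun _ : Fin 1 => tgt (0 : Fin 3).succ 1) = (fun _ => (0 : Fin 2)) := rfl
  have t20 : (fun _ : Fin 1 => tgt (1 : Fin 3).succ 0) = (fun _ => (1 : Fin 2)) := rfl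
  have t21 : (fun _ : Fin 1 => tgt (1 : Fin 3).succ 1) = (fun _ => (0 : Fin 2)) := rfl
  have t30 : (fun _ : Fin 1 => tgt (2 : Fin 3).succ 0) = (fun _ => (0 : Fin 2)) := rfl
  have t31 : (fun _ : Fin 1 => tgt (2 : Fin 3).succ 1) = (fun _ => (1 : Fin 2)) := rfl
  rw [c10, c11, t10, t11, one_mul, one_mul] at E1
  rw [c20, c21, t20, t21] at E2
  rw [c30, c31, t30, t31, one_mul] at E3
  -- E1 : q01 + q10 = 0 ; E2 : -I*q01 + I*q10 = 0 ; E3 : q00 - q11 = 0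
  have hq10 : q (fun _ => 1) (fun _ => 0) = 0 := by
    have h2I : (2 * Complex.I) * q (fun _ => 1) (fun _ => 0) = 0 := by
      linear_combination Complex.I * E1 + E2
    rcases mul_eq_zero.mp h2I with h | h
    · exact absurd h (by simp [Complex.I_ne_zero])
    · exact h
  have hq01 : q (fun _ => 0) (fun _ => 1) = 0 := by linear_combination E1 - hq10
  have hq00 : q (fun _ => 0) (fun _ => 0) = 2⁻¹ := by linear_combination (hsum + E3) / 2
  have hq11 : q (fun _ => 1) (fun _ => 1) = 2⁻¹ := by linear_combination (hsum - E3) / 2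
  have hρ : ∀ u v, redDM n 1 ψ u v = (starRingEnd ℂ) (q u v) := by
    intro u v
    show (∑ w, ψ (glue n 1 u w) * (starRingEnd ℂ) (ψ (glue n 1 v w))) = _
    rw [hqdef, map_sum]
    apply Finset.sum_congr rfl
    intro w _
    rw [_root_.map_mul, Complex.conj_conj, mul_comm]
  have hcases : ∀ u : Fin 1 → Fin 2, u = (fun _ => 0) ∨ u = (fun _ => 1) := by
    intro u
    rcases (by omega : (u 0 : ℕ) = 0 ∨ (u 0 : ℕ) = 1) with h | h
    · left; funext i; rw [Subsingleton.elim i 0]; exact Fin.ext h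
    · right; funext i; rw [Subsingleton.elim i 0]; exact Fin.ext h
  have hne01 : (fun _ : Fin 1 => (0 : Fin 2)) ≠ (fun _ => (1 : Fin 2)) := by
    intro h
    exact absurd (congrFun h 0) (by decide)
  have hone : redDM n 1 ψ = ((2 : ℂ))⁻¹ • 1 := by
    ext u v
    rcases hcases u with h | h <;> rcases hcases v with h' | h' <;> subst h <;> subst h' <;>
      rw [hρ, Matrix.smul_apply, Matrix.one_apply]
    · rw [hq00, if_pos rfl]
      simp [Complex.ext_iff]
    · rw [hq01, if_neg hne01]
      simp
    · rw [hq10, if_neg hne01.symm]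
      simp
    · rw [hq11, if_pos rfl]
      simp [Complex.ext_iff]
  refine ⟨hta, hone, ?_⟩
  rw [hone, smul_mul_smul_comm, Matrix.one_mul, Matrix.trace_smul, Matrix.trace_one]
  simp only [Fintype.card_fun, Fintype.card_fin, pow_one, smul_eq_mul, Nat.cast_ofNat]
  norm_num [Complex.ext_iff]
end
end
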